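/- arXiv:1003.4707 — 4 statements merged into one kernel-verified Lean document; each statement's English description precedes it below -/
import Mathlib

section
/- Let κ be an inaccessible cardinal. Then κ is a Vopěnka cardinal if and only if for every set B ⊆ V_κ of cardinality κ all of whose elements are ordinal L_std-structures, there exist distinct M, N ∈ B and an L_std-elementary embedding j : M → N. -/
open FirstOrder

universe u

/-- The relations of the standard language `L_std`: one binary relation symbol `ε` and one
unary relation symbol `R`. -/
inductive LStdRel : ℕ → Type
  | eps : LStdRel 2
  | r : LStdRel 1

/-- The standard first-order language `L_std`, with one binary relation symbol `ε` and one
unary relation symbol `R`. -/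
def LStd : FirstOrder.Language := ⟨fun _ => Empty, LStdRel⟩

/-- The `L_std`-structure coded by the ZFC sets `M` (the domain), `E` (a binary relation on `M`,
coded as a set of Kuratowski pairs) and `R` (a unary relation, coded as a subset of `M`). -/
def codedStructure (M E R : ZFSet.{u}) : LStd.Structure ↥M.toSet where
  funMap := fun f _ => f.elim
  RelMap
    | .eps, x => ZFSet.pair (x 0).1 (x 1).1 ∈ E
    | .r, x => (x 0).1 ∈ R

/-- The ZFC set `S` codes an `L_std`-structure: it is a triple `⟨M, E, R⟩` with `E` a binary
relation on `M` and `R` a unary relation on `M`. -/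
def IsLStdCode (S : ZFSet.{u}) : Prop :=
  ∃ M E R : ZFSet.{u}, S = M.pair (E.pair R) ∧
    (∀ p ∈ E, ∃ a ∈ M, ∃ b ∈ M, p = a.pair b) ∧ R ⊆ M

/-- The ZFC set `S` codes an ordinal `L_std`-structure: an `L_std`-structure whose domain is a
(von Neumann) ordinal. -/
def IsOrdinalLStdCode (S : ZFSet.{u}) : Prop :=
  ∃ M E R : ZFSet.{u}, S = M.pair (E.pair R) ∧ M.IsOrdinal ∧
    (∀ p ∈ E, ∃ a ∈ M, ∃ b ∈ M, p = a.pair b) ∧ R ⊆ M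

/-- There is an `L_std`-elementary embedding from the structure coded by `S` into the structure
coded by `T`. -/
def ElemEmbeddable (S T : ZFSet.{u}) : Prop :=
  ∃ M E R N E' R' : ZFSet.{u}, S = M.pair (E.pair R) ∧ T = N.pair (E'.pair R') ∧
    letI := codedStructure M E R
    letI := codedStructure N E' R'
    Nonempty (↥M.toSet ↪ₑ[LStd] ↥N.toSet)

/-- `VP A`: there are distinct members `M ≠ N` of the set `A` such that there is an
`L_std`-elementary embedding from `M` into `N`. -/
def VP (A : ZFSet.{u}) : Prop :=
  ∃ M ∈ A, ∃ N ∈ A, M ≠ N ∧ ElemEmbeddable M N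

/-- `κ` is a Vopěnka cardinal: `κ` is inaccessible, and for every set `A ⊆ V_κ` of cardinality
`κ` all of whose elements are `L_std`-structures, `VP A` holds. -/
def IsVopenka (κ : Cardinal.{u}) : Prop :=
  κ.IsInaccessible ∧
    ∀ A : ZFSet.{u}, (∀ x ∈ A, x.rank < κ.ord) →
      Cardinal.mk ↥A.toSet = Cardinal.lift.{u + 1} κ →
      (∀ x ∈ A, IsLStdCode x) → VP A

/-! ### Auxiliary material for the proof -/

theorem Cardinal.lift_down {a : Cardinal.{u}} {b : Cardinal.{max u v}}
    (h : b ≤ Cardinal.lift.{v, u} a) : ∃ a', Cardinal.lift.{v, u} a' = b :=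
  Cardinal.mem_range_lift_of_le h

namespace VopAux
open ZFSet Cardinal Ordinal

set_option linter.constructorNameAsVariable false

/-! #### Von Neumann ordinals -/

/-- The von Neumann ordinal (as a `ZFSet`) associated to an ordinal. -/
noncomputable def vN (o : Ordinal.{u}) : ZFSet.{u} :=
  ZFSet.range fun i : o.ToType => vN ((Ordinal.ToType.mk (o := o)).symm i).1
termination_by o
decreasing_by exact ((Ordinal.ToType.mk (o := o)).symm i).2

theorem mem_vN {x : ZFSet.{u}} {o : Ordinal.{u}} : x ∈ vN o ↔ ∃ p < o, x = vN p := by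
  rw [vN, ZFSet.mem_range]
  constructor
  · rintro ⟨i, rfl⟩
    exact ⟨_, ((Ordinal.ToType.mk (o := o)).symm i).2, rfl⟩
  · rintro ⟨p, hp, rfl⟩
    exact ⟨Ordinal.ToType.mk (o := o) ⟨p, hp⟩, by simp⟩

theorem rank_vN (o : Ordinal.{u}) : (vN o).rank = o := by
  induction o using Ordinal.induction with
  | h o IH =>
    apply le_antisymm
    · rw [ZFSet.rank_le_iff]
      rintro y hy
      obtain ⟨p, hp, rfl⟩ := mem_vN.1 hy
      rwa [IH p hp]
    · by_contra h
      push_neg at h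
      have h1 : vN (vN o).rank ∈ vN o := mem_vN.2 ⟨_, h, rfl⟩
      have h2 := ZFSet.rank_lt_of_mem h1
      rw [IH _ h] at h2
      exact lt_irrefl _ h2

theorem vN_injective : Function.Injective vN := fun a b h => by
  rw [← rank_vN a, ← rank_vN b, h]

theorem isOrdinal_vN (o : Ordinal.{u}) : (vN o).IsOrdinal := by
  constructor
  · intro y hy z hz
    obtain ⟨p, hp, rfl⟩ := mem_vN.1 hy
    obtain ⟨q, hq, rfl⟩ := mem_vN.1 hz
    exact mem_vN.2 ⟨q, hq.trans hp, rfl⟩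
  · intro y z w hyz hzw hw
    obtain ⟨p, hp, rfl⟩ := mem_vN.1 hw
    obtain ⟨q, hq, rfl⟩ := mem_vN.1 hzw
    obtain ⟨r, hr, rfl⟩ := mem_vN.1 hyz
    exact mem_vN.2 ⟨r, hr.trans hq, rfl⟩

/-- The canonical enumeration of a von Neumann ordinal. -/
noncomputable def vNEquiv (o : Ordinal.{u}) : Set.Iio o ≃ ↥(vN o).toSet :=
  Equiv.ofBijective (fun p => ⟨vN p.1, mem_vN.2 ⟨p.1, p.2, rfl⟩⟩)
    ⟨fun a b h => Subtype.ext (vN_injective (congrArg Subtype.val h)),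
     fun x => by obtain ⟨p, hp, h⟩ := mem_vN.1 x.2; exact ⟨⟨p, hp⟩, Subtype.ext h.symm⟩⟩

theorem mk_toSet_vN (o : Ordinal.{u}) : #(vN o).toSet = Cardinal.lift.{u+1} o.card := by
  rw [← Cardinal.mk_congr (vNEquiv o), Ordinal.mk_Iio_ordinal]

/-! #### Smallness of sets of small rank -/

theorem isRegular_lift {κ : Cardinal.{u}} (h : κ.IsRegular) :
    (Cardinal.lift.{u+1} κ).IsRegular := by
  constructor
  · rw [← Cardinal.lift_aleph0.{u+1, u}]
    exact Cardinal.lift_le.2 h.1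
  · calc Cardinal.lift.{u+1} κ ≤ Cardinal.lift.{u+1} κ.ord.cof := Cardinal.lift_le.2 h.2
    _ = (Cardinal.lift.{u+1} κ).ord.cof := by rw [Ordinal.lift_cof, Cardinal.lift_ord]

theorem isStrongLimit_lift {κ : Cardinal.{u}} (h : κ.IsStrongLimit) :
    (Cardinal.lift.{u+1} κ).IsStrongLimit := by
  constructor
  · simpa using h.ne_zero
  · intro x hx
    obtain ⟨x, rfl⟩ := Cardinal.lift_down hx.le
    rw [← Cardinal.lift_two_power]
    exact Cardinal.lift_lt.2 (h.two_power_lt (Cardinal.lift_lt.1 hx))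

theorem mk_rank_lt_aux {κ : Cardinal.{u}} (hκ : κ.IsInaccessible) :
    ∀ α : Ordinal.{u}, α < κ.ord →
      #{z : ZFSet.{u} // z.rank < α} < Cardinal.lift.{u+1} κ := by
  have hreg := isRegular_lift hκ.isRegular
  have hsl := isStrongLimit_lift hκ.isStrongLimit
  intro α
  induction α using Ordinal.induction with
  | h α IH =>
    intro hα
    have hsurj : Function.Surjective
        (fun q : Σ β : Set.Iio α, {z : ZFSet.{u} // z.rank ≤ β.1} =>
          (⟨q.2.1, lt_of_le_of_lt q.2.2 q.1.2⟩ : {z : ZFSet.{u} // z.rank < α})) := by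
      rintro ⟨z, hz⟩
      exact ⟨⟨⟨z.rank, hz⟩, ⟨z, le_rfl⟩⟩, rfl⟩
    refine lt_of_le_of_lt (Cardinal.mk_le_of_surjective hsurj) ?_
    rw [Cardinal.mk_sigma]
    apply Cardinal.sum_lt_of_isRegular hreg
    · rw [Ordinal.mk_Iio_ordinal]
      exact Cardinal.lift_lt.2 (Cardinal.lt_ord.1 hα)
    · rintro ⟨β, hβ⟩
      have hC := IH β hβ (hβ.trans hα)
      refine lt_of_le_of_lt ?_ (hsl.two_power_lt hC)
      rw [← Cardinal.mk_set]
      refine Cardinal.mk_le_of_injective (f := fun z : {z : ZFSet.{u} // z.rank ≤ β} =>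
        {w : {w : ZFSet.{u} // w.rank < β} | w.1 ∈ z.1}) ?_
      rintro ⟨z, hz⟩ ⟨z', hz'⟩ hset
      simp only at hset
      refine Subtype.ext (ZFSet.ext fun w => ⟨fun hw => ?_, fun hw => ?_⟩)
      · have h2 : (⟨w, lt_of_lt_of_le (ZFSet.rank_lt_of_mem hw) hz⟩ :
            {w : ZFSet.{u} // w.rank < β}) ∈ {w : {w : ZFSet.{u} // w.rank < β} | w.1 ∈ z} :=
          hw
        rw [hset] at h2
        exact h2
      · have h2 : (⟨w, lt_of_lt_of_le (ZFSet.rank_lt_of_mem hw) hz'⟩ :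
            {w : ZFSet.{u} // w.rank < β}) ∈ {w : {w : ZFSet.{u} // w.rank < β} | w.1 ∈ z'} :=
          hw
        rw [← hset] at h2
        exact h2

theorem card_toSet_lt {κ : Cardinal.{u}} (hκ : κ.IsInaccessible) {x : ZFSet.{u}}
    (hx : x.rank < κ.ord) : #x.toSet < Cardinal.lift.{u+1} κ := by
  refine lt_of_le_of_lt
    (Cardinal.mk_le_of_injective (f := fun z : x.toSet =>
      (⟨z.1, ZFSet.rank_lt_of_mem z.2⟩ : {z : ZFSet.{u} // z.rank < x.rank})) ?_)
    (mk_rank_lt_aux hκ x.rank hx)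
  rintro ⟨a, ha⟩ ⟨b, hb⟩ hab
  simp only [Subtype.mk.injEq] at hab
  exact Subtype.ext hab

/-! #### The transitive collapse of a coded structure -/

variable (κ : Cardinal.{u}) (M E R : ZFSet.{u})

/-- The ordinal onto which the domain `M` is collapsed. -/
noncomputable def cOrd (h : #M.toSet ≤ Cardinal.lift.{u+1} κ) : Ordinal.{u} :=
  (Classical.choose (Cardinal.lift_down h)).ord

theorem mk_vN_cOrd (h : #M.toSet ≤ Cardinal.lift.{u+1} κ) :
    #(vN (cOrd κ M h)).toSet = #M.toSet := by
  rw [mk_toSet_vN, cOrd, Cardinal.card_ord, Classical.choose_spec (Cardinal.lift_down h)]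

theorem cOrd_lt (h : #M.toSet ≤ Cardinal.lift.{u+1} κ)
    (hs : #M.toSet < Cardinal.lift.{u+1} κ) : cOrd κ M h < κ.ord := by
  rw [cOrd, Cardinal.ord_lt_ord]
  have hc := Classical.choose_spec (Cardinal.lift_down h)
  rw [← hc] at hs
  exact Cardinal.lift_lt.1 hs

/-- A bijection between the domain and its collapse. -/
noncomputable def cEquiv (h : #M.toSet ≤ Cardinal.lift.{u+1} κ) :
    ↥M.toSet ≃ ↥(vN (cOrd κ M h)).toSet :=
  Classical.choice (Cardinal.eq.1 (mk_vN_cOrd κ M h).symm)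

/-- The collapse of the binary relation `E`. -/
noncomputable def cE (h : #M.toSet ≤ Cardinal.lift.{u+1} κ) : ZFSet.{u} :=
  ZFSet.pairSep (fun a b => ∃ (ha : a ∈ (vN (cOrd κ M h)).toSet)
      (hb : b ∈ (vN (cOrd κ M h)).toSet),
    ZFSet.pair (((cEquiv κ M h).symm ⟨a, ha⟩ : ↥M.toSet) : ZFSet.{u})
      (((cEquiv κ M h).symm ⟨b, hb⟩ : ↥M.toSet) : ZFSet.{u}) ∈ E)
    (vN (cOrd κ M h)) (vN (cOrd κ M h))

/-- The collapse of the unary relation `R`. -/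
noncomputable def cR (h : #M.toSet ≤ Cardinal.lift.{u+1} κ) : ZFSet.{u} :=
  ZFSet.sep (fun a => ∃ (ha : a ∈ (vN (cOrd κ M h)).toSet),
    (((cEquiv κ M h).symm ⟨a, ha⟩ : ↥M.toSet) : ZFSet.{u}) ∈ R) (vN (cOrd κ M h))

/-- The collapsed code. -/
noncomputable def cCode (h : #M.toSet ≤ Cardinal.lift.{u+1} κ) : ZFSet.{u} :=
  (vN (cOrd κ M h)).pair ((cE κ M E h).pair (cR κ M R h))

theorem mem_cE (h : #M.toSet ≤ Cardinal.lift.{u+1} κ)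
    (a b : ↥(vN (cOrd κ M h)).toSet) :
    ZFSet.pair a.1 b.1 ∈ cE κ M E h ↔
      ZFSet.pair (((cEquiv κ M h).symm a : ↥M.toSet) : ZFSet.{u})
        (((cEquiv κ M h).symm b : ↥M.toSet) : ZFSet.{u}) ∈ E := by
  rw [cE, ZFSet.mem_pairSep]
  constructor
  · rintro ⟨a', ha', b', hb', heq, ha'2, hb'2, hmem⟩
    obtain ⟨h1, h2⟩ := ZFSet.pair_injective heq
    have e1 : (⟨a', ha'2⟩ : ↥(vN (cOrd κ M h)).toSet) = a := Subtype.ext h1.symm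
    have e2 : (⟨b', hb'2⟩ : ↥(vN (cOrd κ M h)).toSet) = b := Subtype.ext h2.symm
    rw [e1, e2] at hmem
    exact hmem
  · intro hmem
    exact ⟨a.1, a.2, b.1, b.2, rfl, a.2, b.2, hmem⟩

theorem mem_cR (h : #M.toSet ≤ Cardinal.lift.{u+1} κ)
    (a : ↥(vN (cOrd κ M h)).toSet) :
    a.1 ∈ cR κ M R h ↔ (((cEquiv κ M h).symm a : ↥M.toSet) : ZFSet.{u}) ∈ R := by
  rw [cR, ZFSet.mem_sep]
  constructor
  · rintro ⟨-, ha, hmem⟩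
    have e1 : (⟨a.1, ha⟩ : ↥(vN (cOrd κ M h)).toSet) = a := Subtype.ext rfl
    rw [e1] at hmem
    exact hmem
  · intro hmem
    exact ⟨a.2, a.2, hmem⟩

/-- The collapsing bijection is an isomorphism of `L_std`-structures. -/
noncomputable def cIso (h : #M.toSet ≤ Cardinal.lift.{u+1} κ) :
    letI := codedStructure M E R
    letI := codedStructure (vN (cOrd κ M h)) (cE κ M E h) (cR κ M R h)
    ↥M.toSet ≃[LStd] ↥(vN (cOrd κ M h)).toSet :=
  letI := codedStructure M E R
  letI := codedStructure (vN (cOrd κ M h)) (cE κ M E h) (cR κ M R h)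
  { toEquiv := cEquiv κ M h
    map_fun' := fun {n} f _ => f.elim
    map_rel' := by
      intro n r x
      cases r with
      | eps =>
        show ZFSet.pair ((cEquiv κ M h) (x 0) : ZFSet.{u}) ((cEquiv κ M h) (x 1) : ZFSet.{u})
            ∈ cE κ M E h ↔ ZFSet.pair ((x 0) : ZFSet.{u}) ((x 1) : ZFSet.{u}) ∈ E
        rw [mem_cE κ M E h ((cEquiv κ M h) (x 0)) ((cEquiv κ M h) (x 1))]
        simp
      | r =>
        show ((cEquiv κ M h) (x 0) : ZFSet.{u}) ∈ cR κ M R h ↔ ((x 0) : ZFSet.{u}) ∈ R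
        rw [mem_cR κ M R h ((cEquiv κ M h) (x 0))]
        simp }

theorem elemEmbeddable_cCode (h : #M.toSet ≤ Cardinal.lift.{u+1} κ) :
    ElemEmbeddable (M.pair (E.pair R)) (cCode κ M E R h) := by
  letI := codedStructure M E R
  letI := codedStructure (vN (cOrd κ M h)) (cE κ M E h) (cR κ M R h)
  exact ⟨M, E, R, vN (cOrd κ M h), cE κ M E h, cR κ M R h, rfl, rfl,
    ⟨(cIso κ M E R h).toElementaryEmbedding⟩⟩

theorem elemEmbeddable_cCode' (h : #M.toSet ≤ Cardinal.lift.{u+1} κ) :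
    ElemEmbeddable (cCode κ M E R h) (M.pair (E.pair R)) := by
  letI := codedStructure M E R
  letI := codedStructure (vN (cOrd κ M h)) (cE κ M E h) (cR κ M R h)
  exact ⟨vN (cOrd κ M h), cE κ M E h, cR κ M R h, M, E, R, rfl, rfl,
    ⟨(cIso κ M E R h).symm.toElementaryEmbedding⟩⟩

theorem isOrdinalLStdCode_cCode (h : #M.toSet ≤ Cardinal.lift.{u+1} κ) :
    IsOrdinalLStdCode (cCode κ M E R h) := by
  refine ⟨vN (cOrd κ M h), cE κ M E h, cR κ M R h, rfl, isOrdinal_vN _, ?_, ?_⟩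
  · intro p hp
    rw [cE, ZFSet.mem_pairSep] at hp
    obtain ⟨a, ha, b, hb, rfl, -⟩ := hp
    exact ⟨a, ha, b, hb, rfl⟩
  · intro z hz
    rw [cR, ZFSet.mem_sep] at hz
    exact hz.1

theorem rank_kpair_lt {x y : ZFSet.{u}} {o : Ordinal.{u}} (ho : Order.IsSuccLimit o)
    (hx : x.rank < o) (hy : y.rank < o) : (x.pair y).rank < o := by
  have he : x.pair y = ({({x} : ZFSet.{u}), ({x, y} : ZFSet.{u})} : ZFSet.{u}) := rfl
  rw [he, ZFSet.rank_pair, ZFSet.rank_singleton, ZFSet.rank_pair]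
  exact max_lt (ho.succ_lt (ho.succ_lt hx))
    (ho.succ_lt (max_lt (ho.succ_lt hx) (ho.succ_lt hy)))

theorem rank_cCode_lt {κ : Cardinal.{u}} (hκ : κ.IsInaccessible) (M E R : ZFSet.{u})
    (h : #M.toSet ≤ Cardinal.lift.{u+1} κ) (hs : #M.toSet < Cardinal.lift.{u+1} κ) :
    (cCode κ M E R h).rank < κ.ord := by
  have hlim : Order.IsSuccLimit κ.ord := Cardinal.isSuccLimit_ord hκ.1.le
  have ho : cOrd κ M h < κ.ord := cOrd_lt κ M h hs
  have hN : (vN (cOrd κ M h)).rank < κ.ord := by rw [rank_vN]; exact ho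
  have hE : (cE κ M E h).rank < κ.ord := by
    have hsub : cE κ M E h ⊆
        ZFSet.powerset (ZFSet.powerset (vN (cOrd κ M h) ∪ vN (cOrd κ M h))) := by
      intro z hz
      rw [cE, ZFSet.pairSep] at hz
      exact (ZFSet.mem_sep.1 hz).1
    have hle := ZFSet.rank_mono hsub
    rw [ZFSet.rank_powerset, ZFSet.rank_powerset, ZFSet.rank_union, max_self, rank_vN] at hle
    exact hle.trans_lt (hlim.succ_lt (hlim.succ_lt ho))
  have hR : (cR κ M R h).rank < κ.ord := by
    refine lt_of_le_of_lt (ZFSet.rank_mono ?_) hN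
    intro z hz
    rw [cR] at hz
    exact (ZFSet.mem_sep.1 hz).1
  exact rank_kpair_lt hlim hN (rank_kpair_lt hlim hE hR)

theorem cCode_congr {κ : Cardinal.{u}} {M M' E E' R R' : ZFSet.{u}}
    (hM : M = M') (hE : E = E') (hR : R = R')
    (hc : #M.toSet ≤ Cardinal.lift.{u+1} κ) (hc' : #M'.toSet ≤ Cardinal.lift.{u+1} κ) :
    cCode κ M E R hc = cCode κ M' E' R' hc' := by
  subst hM; subst hE; subst hR; rfl

/-! #### The global collapsing function -/

open scoped Classical in
/-- The function collapsing each coded structure to an isomorphic ordinal structure. -/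
noncomputable def collapseFun (κ : Cardinal.{u}) (S : ZFSet.{u}) : ZFSet.{u} :=
  if h : ∃ M E R : ZFSet.{u}, S = M.pair (E.pair R) ∧
      Cardinal.mk M.toSet ≤ Cardinal.lift.{u+1} κ then
    cCode κ h.choose h.choose_spec.choose h.choose_spec.choose_spec.choose
      h.choose_spec.choose_spec.choose_spec.2
  else ∅

theorem collapseFun_eq (κ : Cardinal.{u}) {M E R : ZFSet.{u}}
    (hc : #M.toSet ≤ Cardinal.lift.{u+1} κ) :
    collapseFun κ (M.pair (E.pair R)) = cCode κ M E R hc := by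
  have hex : ∃ M' E' R' : ZFSet.{u}, M.pair (E.pair R) = M'.pair (E'.pair R') ∧
      Cardinal.mk M'.toSet ≤ Cardinal.lift.{u+1} κ := ⟨M, E, R, rfl, hc⟩
  rw [collapseFun, dif_pos hex]
  obtain ⟨hS, hcard⟩ := hex.choose_spec.choose_spec.choose_spec
  obtain ⟨h1, h23⟩ := ZFSet.pair_injective hS
  obtain ⟨h2, h3⟩ := ZFSet.pair_injective h23
  exact cCode_congr h1.symm h2.symm h3.symm _ _

/-! #### Transitivity of elementary embeddability -/

theorem embTrans {S T U : ZFSet.{u}} (h1 : ElemEmbeddable S T)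
    (h2 : ElemEmbeddable T U) : ElemEmbeddable S U := by
  obtain ⟨M, E, R, N, E', R', rfl, rfl, ⟨j⟩⟩ := h1
  obtain ⟨N₂, E₂, R₂, P, E₃, R₃, hT, rfl, ⟨k⟩⟩ := h2
  obtain ⟨hA, hB⟩ := ZFSet.pair_injective hT
  obtain ⟨hC, hD⟩ := ZFSet.pair_injective hB
  subst hA; subst hC; subst hD
  letI := codedStructure M E R
  letI := codedStructure N E' R'
  letI := codedStructure P E₃ R₃
  exact ⟨M, E, R, P, E₃, R₃, rfl, rfl, ⟨k.comp j⟩⟩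

end VopAux

/-- Lemma 5 (`VPoLs`): an inaccessible cardinal `κ` is Vopěnka if and only if for every set
`B ⊆ V_κ` of cardinality `κ` all of whose elements are ordinal `L_std`-structures, there exist
distinct `M, N ∈ B` and an `L_std`-elementary embedding `j : M → N`. -/
theorem isVopenka_iff_ordinal_structures (κ : Cardinal.{u}) (hκ : κ.IsInaccessible) :
    IsVopenka κ ↔
      ∀ B : ZFSet.{u}, (∀ x ∈ B, x.rank < κ.ord) →
        Cardinal.mk ↥B.toSet = Cardinal.lift.{u + 1} κ →
        (∀ x ∈ B, IsOrdinalLStdCode x) →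
        ∃ M ∈ B, ∃ N ∈ B, M ≠ N ∧ ElemEmbeddable M N := by
  classical
  constructor
  · intro h B h1 h2 h3
    exact h.2 B h1 h2 fun x hx => by
      obtain ⟨M, E, R, hS, _, hE, hR⟩ := h3 x hx
      exact ⟨M, E, R, hS, hE, hR⟩
  · intro hB
    refine ⟨hκ, fun A hrank hcard hcode => ?_⟩
    -- For each `S ∈ A`, data of its collapse.
    have key : ∀ S ∈ A, ∃ (M E S1 : ZFSet.{u}) (hc : Cardinal.mk ↥M.toSet ≤
          Cardinal.lift.{u+1} κ),
        S = M.pair (E.pair S1) ∧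
        VopAux.collapseFun κ S = VopAux.cCode κ M E S1 hc ∧
        Cardinal.mk ↥M.toSet < Cardinal.lift.{u+1} κ := by
      intro S hS
      obtain ⟨M, E, R, hSe, hE, hR⟩ := hcode S hS
      have hrM : M.rank < κ.ord := by
        have hm1 : M ∈ ({M} : ZFSet.{u}) := ZFSet.mem_singleton.2 rfl
        have hm2 : ({M} : ZFSet.{u}) ∈ M.pair (E.pair R) :=
          ZFSet.mem_pair.2 (Or.inl rfl)
        have := (ZFSet.rank_lt_of_mem hm1).trans (ZFSet.rank_lt_of_mem hm2)
        rw [← hSe] at this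
        exact this.trans (hrank S hS)
      have hsmall := VopAux.card_toSet_lt hκ hrM
      exact ⟨M, E, R, hsmall.le, hSe, by rw [hSe, VopAux.collapseFun_eq], hsmall⟩
    by_cases hinj : ∀ S ∈ A, ∀ T ∈ A,
        VopAux.collapseFun κ S = VopAux.collapseFun κ T → S = T
    · -- the collapse is injective on `A`
      letI : ZFSet.Definable₁ (VopAux.collapseFun κ) := Classical.allZFSetDefinable _
      set B := ZFSet.image (VopAux.collapseFun κ) A with hBdef
      have hmemB : ∀ y, y ∈ B ↔ ∃ z ∈ A, VopAux.collapseFun κ z = y := fun y =>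
        ZFSet.mem_image
      have hBrank : ∀ x ∈ B, x.rank < κ.ord := by
        intro x hx
        obtain ⟨S, hS, rfl⟩ := (hmemB x).1 hx
        obtain ⟨M, E, R, hc, hSe, hfe, hstrict⟩ := key S hS
        rw [hfe]
        exact VopAux.rank_cCode_lt hκ M E R hc hstrict
      have hBcode : ∀ x ∈ B, IsOrdinalLStdCode x := by
        intro x hx
        obtain ⟨S, hS, rfl⟩ := (hmemB x).1 hx
        obtain ⟨M, E, R, hc, hSe, hfe, hstrict⟩ := key S hS
        rw [hfe]
        exact VopAux.isOrdinalLStdCode_cCode κ M E R hc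
      have hBcard : Cardinal.mk ↥B.toSet = Cardinal.lift.{u+1} κ := by
        rw [← hcard]
        refine (Cardinal.mk_congr (Equiv.ofBijective
          (fun s : ↥A.toSet => (⟨VopAux.collapseFun κ s.1,
            (hmemB _).2 ⟨s.1, s.2, rfl⟩⟩ : ↥B.toSet)) ⟨?_, ?_⟩)).symm
        · rintro ⟨s, hs⟩ ⟨t, ht⟩ hst
          simp only [Subtype.mk.injEq] at hst
          exact Subtype.ext (hinj s hs t ht hst)
        · rintro ⟨y, hy⟩
          obtain ⟨z, hz, hzy⟩ := (hmemB y).1 hy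
          exact ⟨⟨z, hz⟩, Subtype.ext hzy⟩
      obtain ⟨M', hM', N', hN', hne, hemb⟩ := hB B hBrank hBcard hBcode
      obtain ⟨S, hS, rfl⟩ := (hmemB M').1 hM'
      obtain ⟨T, hT, rfl⟩ := (hmemB N').1 hN'
      have hST : S ≠ T := fun he => hne (by rw [he])
      obtain ⟨M, E, R, hc, hSe, hfe, -⟩ := key S hS
      obtain ⟨M2, E2, R2, hc2, hTe, hfe2, -⟩ := key T hT
      refine ⟨S, hS, T, hT, hST, ?_⟩
      have e1 : ElemEmbeddable S (VopAux.collapseFun κ S) := by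
        rw [hfe, hSe]
        exact VopAux.elemEmbeddable_cCode κ M E R hc
      have e2 : ElemEmbeddable (VopAux.collapseFun κ T) T := by
        rw [hfe2, hTe]
        exact VopAux.elemEmbeddable_cCode' κ M2 E2 R2 hc2
      exact VopAux.embTrans (VopAux.embTrans e1 hemb) e2
    · -- the collapse identifies two distinct elements of `A`
      push_neg at hinj
      obtain ⟨S, hS, T, hT, hfeq, hne⟩ := hinj
      obtain ⟨M, E, R, hc, hSe, hfe, -⟩ := key S hS
      obtain ⟨M2, E2, R2, hc2, hTe, hfe2, -⟩ := key T hT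
      refine ⟨S, hS, T, hT, hne, ?_⟩
      have e1 : ElemEmbeddable S (VopAux.collapseFun κ S) := by
        rw [hfe, hSe]
        exact VopAux.elemEmbeddable_cCode κ M E R hc
      have e2 : ElemEmbeddable (VopAux.collapseFun κ T) T := by
        rw [hfe2, hTe]
        exact VopAux.elemEmbeddable_cCode' κ M2 E2 R2 hc2
      exact VopAux.embTrans e1 (hfeq ▸ e2)
end

section
/- Let κ be an inaccessible cardinal, and suppose that for every set B ⊆ V_κ of cardinality κ all of whose elements are ordinal L_std-structures there exist distinct M, N ∈ B and an L_std-elementary embedding j : M → N. Then κ is a Vopěnka cardinal, i.e., for every set A ⊆ V_κ of cardinality κ all of whose elements are L_std-structures (with domains of arbitrary form) there exist distinct M, N ∈ A and an L_std-elementary embedding j : M → N. -/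
open FirstOrder

universe u

theorem ZFSet.mem_toSet (a u : ZFSet.{u}) : a ∈ u.toSet ↔ a ∈ u := Iff.rfl

instance ZFSet.small_toSet' (M : ZFSet.{u}) : Small.{u} ↥M.toSet := ZFSet.small_coe M

namespace VopenkaAux

open ZFSet Ordinal Cardinal

section clps

variable {α : Type u} (r : α → α → Prop) [IsWellOrder α r]

noncomputable def clps : α → ZFSet.{u} :=
  (IsWellFounded.wf (r := r)).fix fun x IH => ZFSet.range.{u,u} fun y : {y // r y x} => IH y.1 y.2

theorem clps_eq (x : α) :
    clps r x = ZFSet.range.{u,u} fun y : {y // r y x} => clps r y.1 :=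
  WellFounded.fix_eq _ _ _

theorem mem_clps {x : α} {z : ZFSet.{u}} :
    z ∈ clps r x ↔ ∃ y, ∃ _ : r y x, clps r y = z := by
  rw [clps_eq, ZFSet.mem_range]
  simp [Set.mem_range, Subtype.exists]

theorem clps_injective : Function.Injective (clps r) := by
  intro a b h
  rcases trichotomous_of r a b with hab | rfl | hba
  · exact absurd (h ▸ (mem_clps r).2 ⟨a, hab, rfl⟩) (ZFSet.mem_irrefl _)
  · rfl
  · have : clps r b ∈ clps r a := (mem_clps r).2 ⟨b, hba, rfl⟩
    rw [h] at this
    exact absurd this (ZFSet.mem_irrefl _)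

theorem clps_mem {a b : α} : clps r a ∈ clps r b ↔ r a b := by
  rw [mem_clps]
  constructor
  · rintro ⟨y, hy, hee⟩
    rwa [clps_injective r hee] at hy
  · exact fun hab => ⟨a, hab, rfl⟩

theorem isOrdinal_range_clps : (ZFSet.range.{u,u} (clps r)).IsOrdinal := by
  constructor
  · intro y hy
    rw [ZFSet.mem_range] at hy
    obtain ⟨x, rfl⟩ := hy
    intro z hz
    obtain ⟨w, hw, rfl⟩ := (mem_clps r).1 hz
    exact ZFSet.mem_range.2 ⟨w, rfl⟩
  · intro y z w hyz hzw hwx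
    rw [ZFSet.mem_range] at hwx
    obtain ⟨x, rfl⟩ := hwx
    obtain ⟨b, hb, rfl⟩ := (mem_clps r).1 hzw
    obtain ⟨c, hc, rfl⟩ := (mem_clps r).1 hyz
    exact (mem_clps r).2 ⟨c, _root_.trans hc hb, rfl⟩

theorem rank_clps_le (x : α) : (clps r x).rank ≤ Ordinal.typein r x := by
  induction x using (IsWellFounded.wf (r := r)).induction with
  | _ x IH =>
    rw [clps_eq, ZFSet.rank_range]
    apply Ordinal.lsub_le
    rintro ⟨y, hy⟩
    exact (IH y hy).trans_lt ((Ordinal.typein_lt_typein r).2 hy)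

theorem rank_range_clps_le : (ZFSet.range.{u,u} (clps r)).rank ≤ Ordinal.type r := by
  rw [ZFSet.rank_range]
  exact Ordinal.lsub_le fun i => (rank_clps_le r i).trans_lt (Ordinal.typein_lt_type r i)

end clps

section ordCode

variable (M E R : ZFSet.{u})

/-- A `Type u` copy of the domain of `M`. -/
abbrev SH (M : ZFSet.{u}) : Type u := Shrink.{u} (↥M.toSet)

/-- The underlying ZFC element of `M` corresponding to `a : SH M`. -/
noncomputable def elm (a : SH M) : ZFSet.{u} := ((equivShrink (↥M.toSet)).symm a).1

theorem elm_mem (a : SH M) : elm M a ∈ M := ((equivShrink (↥M.toSet)).symm a).2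

/-- The Mostowski-style collapse of a chosen well-order on the domain of `M`. -/
noncomputable def oMap : SH M → ZFSet.{u} := clps (WellOrderingRel (α := SH M))

theorem oMap_injective : Function.Injective (oMap M) := clps_injective _

/-- The von Neumann ordinal replacing the domain `M`. -/
noncomputable def ordO : ZFSet.{u} := ZFSet.range.{u,u} (oMap M)

/-- The binary relation on `ordO M` induced by `E`. -/
noncomputable def ordE : ZFSet.{u} :=
  ZFSet.range.{u,u}
    fun p : {p : SH M × SH M // ZFSet.pair (elm M p.1) (elm M p.2) ∈ E} =>
      ZFSet.pair (oMap M p.1.1) (oMap M p.1.2)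

/-- The unary relation on `ordO M` induced by `R`. -/
noncomputable def ordR : ZFSet.{u} :=
  ZFSet.range.{u,u} fun a : {a : SH M // elm M a ∈ R} => oMap M a.1

/-- The ordinal code replacing the code `⟨M, E, R⟩`. -/
noncomputable def ordCode : ZFSet.{u} := (ordO M).pair ((ordE M E).pair (ordR M R))

theorem mem_ordO {z : ZFSet.{u}} : z ∈ ordO M ↔ ∃ a, oMap M a = z := by
  rw [ordO, ZFSet.mem_range]

theorem isOrdinal_ordO : (ordO M).IsOrdinal := isOrdinal_range_clps _

theorem pair_mem_ordE {a b : SH M} :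
    ZFSet.pair (oMap M a) (oMap M b) ∈ ordE M E ↔ ZFSet.pair (elm M a) (elm M b) ∈ E := by
  rw [ordE, ZFSet.mem_range]
  constructor
  · rintro ⟨⟨⟨a', b'⟩, hp⟩, he⟩
    obtain ⟨h1, h2⟩ := ZFSet.pair_injective he
    rwa [oMap_injective M h1, oMap_injective M h2] at hp
  · exact fun hp => ⟨⟨(a, b), hp⟩, rfl⟩

theorem oMap_mem_ordR {a : SH M} : oMap M a ∈ ordR M R ↔ elm M a ∈ R := by
  rw [ordR, ZFSet.mem_range]
  constructor
  · rintro ⟨⟨a', ha⟩, he⟩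
    have h2 : a' = a := oMap_injective M he
    subst h2; exact ha
  · exact fun hp => ⟨⟨a, hp⟩, rfl⟩

theorem ordE_wellformed : ∀ p ∈ ordE M E, ∃ a ∈ ordO M, ∃ b ∈ ordO M, p = a.pair b := by
  intro p hp
  rw [ordE, ZFSet.mem_range] at hp
  obtain ⟨⟨⟨a, b⟩, _⟩, rfl⟩ := hp
  exact ⟨_, (mem_ordO M).2 ⟨a, rfl⟩, _, (mem_ordO M).2 ⟨b, rfl⟩, rfl⟩

theorem ordR_subset : ordR M R ⊆ ordO M := by
  intro z hz
  rw [ordR, ZFSet.mem_range] at hz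
  obtain ⟨⟨a, _⟩, rfl⟩ := hz
  exact (mem_ordO M).2 ⟨a, rfl⟩

theorem isOrdinalLStdCode_ordCode : IsOrdinalLStdCode (ordCode M E R) :=
  ⟨ordO M, ordE M E, ordR M R, rfl, isOrdinal_ordO M, ordE_wellformed M E, ordR_subset M R⟩

/-- The equivalence between the domain of `M` and the collapsed ordinal. -/
noncomputable def equivOrdO : ↥M.toSet ≃ ↥(ordO M).toSet :=
  (equivShrink (↥M.toSet)).trans <| Equiv.ofBijective
    (fun a => ⟨oMap M a, (ZFSet.mem_toSet _ _).2 <| (mem_ordO M).2 ⟨a, rfl⟩⟩)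
    ⟨fun a b hab => oMap_injective M (Subtype.ext_iff.1 hab),
     fun z => by
      obtain ⟨a, ha⟩ := (mem_ordO M).1 ((ZFSet.mem_toSet _ _).1 z.2)
      exact ⟨a, Subtype.ext ha⟩⟩

theorem equivOrdO_apply (m : ↥M.toSet) :
    (equivOrdO M m : ZFSet.{u}) = oMap M (equivShrink (↥M.toSet) m) := rfl

theorem elm_equivShrink (m : ↥M.toSet) :
    elm M (equivShrink (↥M.toSet) m) = (m : ZFSet.{u}) := by
  rw [elm, Equiv.symm_apply_apply]

/-- The isomorphism between the coded structure and its ordinal replacement. -/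
noncomputable def ordIso :
    letI := codedStructure M E R
    letI := codedStructure (ordO M) (ordE M E) (ordR M R)
    ↥M.toSet ≃[LStd] ↥(ordO M).toSet :=
  letI := codedStructure M E R
  letI := codedStructure (ordO M) (ordE M E) (ordR M R)
  { toEquiv := equivOrdO M
    map_fun' := fun {n} f _ => f.elim
    map_rel' := fun {n} rel x => by
      cases rel
      · show ZFSet.pair (equivOrdO M (x 0) : ZFSet) (equivOrdO M (x 1) : ZFSet) ∈ ordE M E ↔
          ZFSet.pair ((x 0) : ZFSet) ((x 1) : ZFSet) ∈ E
        rw [equivOrdO_apply, equivOrdO_apply, pair_mem_ordE, elm_equivShrink, elm_equivShrink]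
      · show (equivOrdO M (x 0) : ZFSet) ∈ ordR M R ↔ ((x 0) : ZFSet) ∈ R
        rw [equivOrdO_apply, oMap_mem_ordR, elm_equivShrink] }

end ordCode

section rankCard

theorem rank_pair_lt {o : Ordinal.{u}} (ho : Order.IsSuccLimit o) {x y : ZFSet.{u}}
    (hx : x.rank < o) (hy : y.rank < o) : (x.pair y).rank < o := by
  have hp : x.pair y = insert ({x} : ZFSet.{u}) {({x, y} : ZFSet.{u})} := rfl
  have h2 : ({x, y} : ZFSet.{u}) = insert x {y} := rfl
  rw [hp]
  simp only [ZFSet.rank_insert, ZFSet.rank_singleton]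
  rw [sup_lt_iff]
  exact ⟨ho.succ_lt (ho.succ_lt hx),
    ho.succ_lt (sup_lt_iff.2 ⟨ho.succ_lt hx, ho.succ_lt hy⟩)⟩

theorem rank_pair_fst_lt {x y : ZFSet.{u}} : x.rank < (x.pair y).rank := by
  have h1 : x ∈ ({x} : ZFSet.{u}) := ZFSet.mem_singleton.2 rfl
  have h2 : ({x} : ZFSet.{u}) ∈ x.pair y := by
    show ({x} : ZFSet.{u}) ∈ insert ({x} : ZFSet.{u}) {({x, y} : ZFSet.{u})}
    exact ZFSet.mem_insert _ _
  exact (ZFSet.rank_lt_of_mem h1).trans (ZFSet.rank_lt_of_mem h2)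

theorem rank_pair_snd_lt {x y : ZFSet.{u}} : y.rank < (x.pair y).rank := by
  have h1 : y ∈ ({x, y} : ZFSet.{u}) := ZFSet.mem_insert_iff.2 (Or.inr (ZFSet.mem_singleton.2 rfl))
  have h2 : ({x, y} : ZFSet.{u}) ∈ x.pair y := by
    show ({x, y} : ZFSet.{u}) ∈ insert ({x} : ZFSet.{u}) {({x, y} : ZFSet.{u})}
    exact ZFSet.mem_insert_iff.2 (Or.inr (ZFSet.mem_singleton.2 rfl))
  exact (ZFSet.rank_lt_of_mem h1).trans (ZFSet.rank_lt_of_mem h2)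

theorem isRegular_lift {κ : Cardinal.{u}} (hr : κ.IsRegular) :
    (Cardinal.lift.{u + 1} κ).IsRegular := by
  constructor
  · exact Cardinal.aleph0_le_lift.2 hr.1
  · rw [← Cardinal.lift_ord, ← Ordinal.lift_cof]
    exact Cardinal.lift_le.2 hr.2

theorem card_rank_lt {κ : Cardinal.{u}} (hκ : κ.IsInaccessible) :
    ∀ β : Ordinal.{u}, β < κ.ord →
      #{y : ZFSet.{u} // y.rank < β} < Cardinal.lift.{u + 1} κ := by
  intro β
  induction β using Ordinal.induction with
  | h β IH =>
    intro hβ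
    have hreg := isRegular_lift hκ.isRegular
    have e1 : #{y : ZFSet.{u} // y.rank < β}
        = Cardinal.sum (fun γ : Set.Iio β =>
            #{p : {y : ZFSet.{u} // y.rank < β} // (⟨p.1.rank, p.2⟩ : Set.Iio β) = γ}) := by
      rw [← Cardinal.mk_sigma]
      exact Cardinal.mk_congr (Equiv.sigmaFiberEquiv
        (fun y : {y : ZFSet.{u} // y.rank < β} => (⟨y.1.rank, y.2⟩ : Set.Iio β))).symm
    have e2 : ∀ γ : Set.Iio β,
        #{p : {y : ZFSet.{u} // y.rank < β} // (⟨p.1.rank, p.2⟩ : Set.Iio β) = γ}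
          ≤ 2 ^ #{z : ZFSet.{u} // z.rank < γ.1} := by
      intro γ
      rw [← Cardinal.mk_set]
      refine Cardinal.mk_le_of_injective
        (f := fun p => {z : {z : ZFSet.{u} // z.rank < γ.1} | z.1 ∈ p.1.1}) ?_
      rintro ⟨⟨y₁, hy₁⟩, hfy₁⟩ ⟨⟨y₂, hy₂⟩, hfy₂⟩ hset
      have hr₁ : y₁.rank = γ.1 := congrArg Subtype.val hfy₁
      have hr₂ : y₂.rank = γ.1 := congrArg Subtype.val hfy₂
      have hyy : y₁ = y₂ := by
        apply ZFSet.ext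
        intro z
        constructor
        · intro hz
          have hzr : z.rank < γ.1 := hr₁ ▸ ZFSet.rank_lt_of_mem hz
          exact (Set.ext_iff.1 hset ⟨z, hzr⟩).1 hz
        · intro hz
          have hzr : z.rank < γ.1 := hr₂ ▸ ZFSet.rank_lt_of_mem hz
          exact (Set.ext_iff.1 hset ⟨z, hzr⟩).2 hz
      exact Subtype.ext (Subtype.ext hyy)
    have e3 : #{y : ZFSet.{u} // y.rank < β}
        ≤ Cardinal.sum (fun γ : Set.Iio β => 2 ^ #{z : ZFSet.{u} // z.rank < γ.1}) :=
      e1 ▸ Cardinal.sum_le_sum _ _ e2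
    refine e3.trans_lt (Cardinal.sum_lt_lift_of_isRegular.{u + 1, u + 1} hreg ?_ ?_)
    · rw [Cardinal.lift_id, Ordinal.mk_Iio_ordinal]
      exact Cardinal.lift_lt.2 (Cardinal.lt_ord.1 hβ)
    · intro γ
      have hW := IH γ.1 γ.2 (γ.2.trans hβ)
      obtain ⟨w, hw, hlw⟩ := Cardinal.lt_lift_iff.1 hW
      rw [← hlw, ← Cardinal.lift_two_power]
      exact Cardinal.lift_lt.2 (hκ.isStrongLimit.two_power_lt hw)

theorem card_toSet_lt {κ : Cardinal.{u}} (hκ : κ.IsInaccessible) {x : ZFSet.{u}}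
    (hx : x.rank < κ.ord) : #(↥x.toSet) < Cardinal.lift.{u + 1} κ := by
  refine lt_of_le_of_lt ?_ (card_rank_lt hκ x.rank hx)
  exact Cardinal.mk_le_of_injective
    (f := fun y : ↥x.toSet =>
      (⟨y.1, ZFSet.rank_lt_of_mem ((ZFSet.mem_toSet _ _).1 y.2)⟩ : {y : ZFSet.{u} // y.rank < x.rank}))
    (fun a b hab => by
      have h := congrArg Subtype.val hab
      exact Subtype.ext h)

theorem card_SH_lt {κ : Cardinal.{u}} (hκ : κ.IsInaccessible) {M : ZFSet.{u}}
    (hM : M.rank < κ.ord) : #(SH M) < κ := by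
  have h1 := card_toSet_lt hκ hM
  have h2 : Cardinal.lift.{u + 1} #(SH M) = #(↥M.toSet) := by
    have h3 := Cardinal.lift_mk_shrink'.{u + 1, u} (↥M.toSet)
    rw [h3]
    exact Cardinal.lift_id'.{u, u + 1} _
  rw [← Cardinal.lift_lt.{u, u + 1}, h2]
  exact h1

theorem type_wor_lt {κ : Cardinal.{u}} (hκ : κ.IsInaccessible) {M : ZFSet.{u}}
    (hM : M.rank < κ.ord) : Ordinal.type (WellOrderingRel (α := SH M)) < κ.ord :=
  Cardinal.lt_ord.2 (by rw [Ordinal.card_type]; exact card_SH_lt hκ hM)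

theorem rank_ordO_lt {κ : Cardinal.{u}} (hκ : κ.IsInaccessible) {M : ZFSet.{u}}
    (hM : M.rank < κ.ord) : (ordO M).rank < κ.ord :=
  (rank_range_clps_le _).trans_lt (type_wor_lt hκ hM)

theorem rank_oMap_lt {κ : Cardinal.{u}} (hκ : κ.IsInaccessible) {M : ZFSet.{u}}
    (hM : M.rank < κ.ord) (a : SH M) : (oMap M a).rank < κ.ord :=
  ((rank_clps_le _ a).trans_lt (Ordinal.typein_lt_type _ a)).trans (type_wor_lt hκ hM)

theorem rank_ordE_lt {κ : Cardinal.{u}} (hκ : κ.IsInaccessible) {M E : ZFSet.{u}}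
    (hM : M.rank < κ.ord) : (ordE M E).rank < κ.ord := by
  rw [ordE, ZFSet.rank_range]
  apply Cardinal.lsub_lt_ord_of_isRegular.{u, u} hκ.isRegular
  · refine (Cardinal.mk_subtype_le _).trans_lt ?_
    simp only [Cardinal.mk_prod, Cardinal.lift_id]
    exact Cardinal.mul_lt_of_lt hκ.1.le (card_SH_lt hκ hM) (card_SH_lt hκ hM)
  · intro p
    exact rank_pair_lt (Cardinal.isSuccLimit_ord hκ.1.le)
      (rank_oMap_lt hκ hM _) (rank_oMap_lt hκ hM _)

theorem rank_ordR_lt {κ : Cardinal.{u}} (hκ : κ.IsInaccessible) {M R : ZFSet.{u}}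
    (hM : M.rank < κ.ord) : (ordR M R).rank < κ.ord := by
  rw [ordR, ZFSet.rank_range]
  apply Cardinal.lsub_lt_ord_of_isRegular.{u, u} hκ.isRegular
  · exact (Cardinal.mk_subtype_le _).trans_lt (card_SH_lt hκ hM)
  · intro a
    exact rank_oMap_lt hκ hM _

theorem rank_ordCode_lt {κ : Cardinal.{u}} (hκ : κ.IsInaccessible) {M E R : ZFSet.{u}}
    (hM : M.rank < κ.ord) : (ordCode M E R).rank < κ.ord := by
  have hlim := Cardinal.isSuccLimit_ord hκ.1.le
  exact rank_pair_lt hlim (rank_ordO_lt hκ hM)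
    (rank_pair_lt hlim (rank_ordE_lt hκ hM) (rank_ordR_lt hκ hM))

end rankCard

section phi

/-- Unpair a Kuratowski pair, by choice. -/
noncomputable def unp (S : ZFSet.{u}) : ZFSet.{u} × ZFSet.{u} :=
  @dite _ (∃ p : ZFSet.{u} × ZFSet.{u}, S = ZFSet.pair p.1 p.2) (Classical.propDecidable _)
    (fun h => h.choose) (fun _ => (∅, ∅))

theorem unp_pair (a b : ZFSet.{u}) : unp (a.pair b) = (a, b) := by
  have h : ∃ p : ZFSet.{u} × ZFSet.{u}, a.pair b = ZFSet.pair p.1 p.2 := ⟨(a, b), rfl⟩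
  rw [unp, dif_pos h]
  obtain ⟨h1, h2⟩ := ZFSet.pair_injective h.choose_spec
  exact Prod.ext h1.symm h2.symm

/-- The map sending a coded structure to its ordinal-coded copy. -/
noncomputable def Phi (S : ZFSet.{u}) : ZFSet.{u} :=
  ordCode (unp S).1 (unp (unp S).2).1 (unp (unp S).2).2

theorem Phi_pair (M E R : ZFSet.{u}) : Phi (M.pair (E.pair R)) = ordCode M E R := by
  rw [Phi, unp_pair, unp_pair]

end phi

theorem main (κ : Cardinal.{u}) (hκ : κ.IsInaccessible)
    (h : ∀ B : ZFSet.{u}, (∀ x ∈ B, x.rank < κ.ord) →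
      Cardinal.mk ↥B.toSet = Cardinal.lift.{u + 1} κ →
      (∀ x ∈ B, IsOrdinalLStdCode x) →
      ∃ M ∈ B, ∃ N ∈ B, M ≠ N ∧ ElemEmbeddable M N) :
    IsVopenka κ := by
  classical
  refine ⟨hκ, fun A hArank hAcard hAcode => ?_⟩
  by_cases hinj : ∀ S₁ ∈ A, ∀ S₂ ∈ A, Phi S₁ = Phi S₂ → S₁ = S₂
  · -- Phi is injective on A; apply the hypothesis to the image of A.
    letI : ZFSet.Definable₁ Phi := Classical.allZFSetDefinable _
    set B : ZFSet.{u} := ZFSet.image Phi A with hB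
    have memB : ∀ {x : ZFSet.{u}}, x ∈ B ↔ ∃ S ∈ A, Phi S = x := by
      intro x
      exact ZFSet.mem_image
    have hrank : ∀ x ∈ B, x.rank < κ.ord := by
      intro x hx
      obtain ⟨S, hS, rfl⟩ := memB.1 hx
      obtain ⟨M, E, R, rfl, -, -⟩ := hAcode S hS
      rw [Phi_pair]
      have hM : M.rank < κ.ord := rank_pair_fst_lt.trans (hArank _ hS)
      exact rank_ordCode_lt hκ hM
    have hcard : Cardinal.mk ↥B.toSet = Cardinal.lift.{u + 1} κ := by
      rw [← hAcard]
      refine (Cardinal.mk_congr (Equiv.ofBijective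
        (fun S : ↥A.toSet => (⟨Phi S.1,
          (ZFSet.mem_toSet _ _).2 (memB.2 ⟨S.1, (ZFSet.mem_toSet _ _).1 S.2, rfl⟩)⟩ : ↥B.toSet))
        ⟨?_, ?_⟩)).symm
      · rintro ⟨S₁, hS₁⟩ ⟨S₂, hS₂⟩ hee
        have he2 := congrArg Subtype.val hee
        exact Subtype.ext (hinj S₁ ((ZFSet.mem_toSet _ _).1 hS₁) S₂
          ((ZFSet.mem_toSet _ _).1 hS₂) he2)
      · rintro ⟨T, hT⟩
        obtain ⟨S, hS, hST⟩ := memB.1 ((ZFSet.mem_toSet _ _).1 hT)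
        exact ⟨⟨S, (ZFSet.mem_toSet _ _).2 hS⟩, Subtype.ext hST⟩
    have hord : ∀ x ∈ B, IsOrdinalLStdCode x := by
      intro x hx
      obtain ⟨S, hS, rfl⟩ := memB.1 hx
      obtain ⟨M, E, R, rfl, -, -⟩ := hAcode S hS
      rw [Phi_pair]
      exact isOrdinalLStdCode_ordCode M E R
    obtain ⟨T₁, hT₁, T₂, hT₂, hTne, hTemb⟩ := h B hrank hcard hord
    obtain ⟨S₁, hS₁, rfl⟩ := memB.1 hT₁
    obtain ⟨S₂, hS₂, rfl⟩ := memB.1 hT₂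
    refine ⟨S₁, hS₁, S₂, hS₂, fun hSS => hTne (by rw [hSS]), ?_⟩
    obtain ⟨M₁, E₁, R₁, rfl, -, -⟩ := hAcode S₁ hS₁
    obtain ⟨M₂, E₂, R₂, rfl, -, -⟩ := hAcode S₂ hS₂
    obtain ⟨X₁, X₂, X₃, Y₁, Y₂, Y₃, hT1eq, hT2eq, ⟨j⟩⟩ := hTemb
    rw [Phi_pair] at hT1eq hT2eq
    rw [show ordCode M₁ E₁ R₁ = (ordO M₁).pair ((ordE M₁ E₁).pair (ordR M₁ R₁)) from rfl]
      at hT1eq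
    rw [show ordCode M₂ E₂ R₂ = (ordO M₂).pair ((ordE M₂ E₂).pair (ordR M₂ R₂)) from rfl]
      at hT2eq
    obtain ⟨hO1, hER1⟩ := ZFSet.pair_injective hT1eq
    obtain ⟨hE1, hR1⟩ := ZFSet.pair_injective hER1
    obtain ⟨hO2, hER2⟩ := ZFSet.pair_injective hT2eq
    obtain ⟨hE2, hR2⟩ := ZFSet.pair_injective hER2
    subst hO1 hE1 hR1 hO2 hE2 hR2
    refine ⟨M₁, E₁, R₁, M₂, E₂, R₂, rfl, rfl, ?_⟩
    letI := codedStructure M₁ E₁ R₁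
    letI := codedStructure M₂ E₂ R₂
    letI := codedStructure (ordO M₁) (ordE M₁ E₁) (ordR M₁ R₁)
    letI := codedStructure (ordO M₂) (ordE M₂ E₂) (ordR M₂ R₂)
    exact ⟨((ordIso M₂ E₂ R₂).symm.toElementaryEmbedding.comp j).comp
      (ordIso M₁ E₁ R₁).toElementaryEmbedding⟩
  · -- Phi is not injective on A: two distinct codes with the same ordinal copy.
    push_neg at hinj
    obtain ⟨S₁, hS₁, S₂, hS₂, hPhi, hne⟩ := hinj
    refine ⟨S₁, hS₁, S₂, hS₂, hne, ?_⟩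
    obtain ⟨M₁, E₁, R₁, rfl, -, -⟩ := hAcode S₁ hS₁
    obtain ⟨M₂, E₂, R₂, rfl, -, -⟩ := hAcode S₂ hS₂
    rw [Phi_pair, Phi_pair] at hPhi
    rw [show ordCode M₁ E₁ R₁ = (ordO M₁).pair ((ordE M₁ E₁).pair (ordR M₁ R₁)) from rfl,
      show ordCode M₂ E₂ R₂ = (ordO M₂).pair ((ordE M₂ E₂).pair (ordR M₂ R₂)) from rfl] at hPhi
    obtain ⟨hO, hER⟩ := ZFSet.pair_injective hPhi
    obtain ⟨hE, hR⟩ := ZFSet.pair_injective hER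
    refine ⟨M₁, E₁, R₁, M₂, E₂, R₂, rfl, rfl, ?_⟩
    letI := codedStructure M₁ E₁ R₁
    letI := codedStructure M₂ E₂ R₂
    letI := codedStructure (ordO M₁) (ordE M₁ E₁) (ordR M₁ R₁)
    have i₁ := ordIso M₁ E₁ R₁
    have i₂ := ordIso M₂ E₂ R₂
    rw [← hO, ← hE, ← hR] at i₂
    exact ⟨i₂.symm.toElementaryEmbedding.comp i₁.toElementaryEmbedding⟩

end VopenkaAux

/-- If `κ` is inaccessible and for every set `B ⊆ V_κ` of cardinality `κ` of ordinal
`L_std`-structures there are distinct `M, N ∈ B` with an `L_std`-elementary embedding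
`j : M → N`, then `κ` is a Vopěnka cardinal. -/
theorem isVopenka_of_ordinal_structures (κ : Cardinal.{u}) (hκ : κ.IsInaccessible)
    (h : ∀ B : ZFSet.{u}, (∀ x ∈ B, x.rank < κ.ord) →
      Cardinal.mk ↥B.toSet = Cardinal.lift.{u + 1} κ →
      (∀ x ∈ B, IsOrdinalLStdCode x) →
      ∃ M ∈ B, ∃ N ∈ B, M ≠ N ∧ ElemEmbeddable M N) :
    IsVopenka κ :=
  VopenkaAux.main κ hκ h
end

section
/- Suppose that for every proper class A there is an A-extendible cardinal. Then for every proper class B of ordinal L_std-structures there exist M, N ∈ B whose domains have different cardinalities and an L_std-elementary embedding j : M → N. -/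
open FirstOrder

universe u

/-- A class of sets (i.e. a predicate on ZFC sets) is a proper class if it is not coextensive
with any set. -/
def IsProperClass (A : Set ZFSet.{u}) : Prop :=
  ¬∃ a : ZFSet.{u}, a.toSet = A

/-- The structure `⟨V_η, ∈, A ∩ V_η⟩`: the domain consists of the sets of rank `< η`, with `ε`
interpreted as membership and `R` interpreted as membership in the class `A`. -/
def VStructure (η : Ordinal.{u}) (A : Set ZFSet.{u}) :
    LStd.Structure {x : ZFSet.{u} // x.rank < η} where
  funMap := fun f _ => f.elim
  RelMap
    | .eps, x => (x 0).1 ∈ (x 1).1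
    | .r, x => (x 0).1 ∈ A

/-- The ZFC set `α` is a (von Neumann) cardinal: it is an ordinal and every one of its elements
has strictly smaller cardinality. -/
def ZFIsCardinal (α : ZFSet.{u}) : Prop :=
  α.IsOrdinal ∧ ∀ β ∈ α, Cardinal.mk ↥β.toSet < Cardinal.mk ↥α.toSet

/-- For von Neumann ordinals `α`, `η`, `ζ` and a class `A`: there is an elementary embedding
`j : ⟨V_η, ∈, A ∩ V_η⟩ → ⟨V_ζ, ∈, A ∩ V_ζ⟩` with critical point `α` (i.e. `j` fixes every
ordinal `β < α` and moves `α`) such that `j α > η`. -/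
def ExtWitness (A : Set ZFSet.{u}) (α η ζ : ZFSet.{u}) : Prop :=
  letI := VStructure η.rank A
  letI := VStructure ζ.rank A
  ∃ j : {x : ZFSet.{u} // x.rank < η.rank} ↪ₑ[LStd] {x : ZFSet.{u} // x.rank < ζ.rank},
    (∀ (β : ZFSet.{u}) (hβ : β.rank < η.rank), β ∈ α → (j ⟨β, hβ⟩).1 = β) ∧
    ∀ hα : α.rank < η.rank, (j ⟨α, hα⟩).1 ≠ α ∧ η ∈ (j ⟨α, hα⟩).1

/-- `α` is `η`-extendible for the class `A`: there are an ordinal `ζ` and an elementary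
embedding `j : ⟨V_η, ∈, A ∩ V_η⟩ → ⟨V_ζ, ∈, A ∩ V_ζ⟩` with critical point `α` and `j α > η`. -/
def EtaExtendibleFor (A : Set ZFSet.{u}) (α η : ZFSet.{u}) : Prop :=
  ∃ ζ : ZFSet.{u}, ζ.IsOrdinal ∧ ExtWitness A α η ζ

/-- `α` is an `A`-extendible cardinal: `α` is a cardinal that is `η`-extendible for `A`
for every ordinal `η > α`. -/
def AExtendible (A : Set ZFSet.{u}) (α : ZFSet.{u}) : Prop :=
  ZFIsCardinal α ∧ ∀ η : ZFSet.{u}, η.IsOrdinal → α ∈ η → EtaExtendibleFor A α η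

/-- There is an `L_std`-elementary embedding from the structure coded by `S` into the structure
coded by `T`, where the domains of the two structures have different cardinalities. -/
def ElemEmbeddableDiffCard (S T : ZFSet.{u}) : Prop :=
  ∃ M E R N E' R' : ZFSet.{u}, S = M.pair (E.pair R) ∧ T = N.pair (E'.pair R') ∧
    Cardinal.mk ↥M.toSet ≠ Cardinal.mk ↥N.toSet ∧
    letI := codedStructure M E R
    letI := codedStructure N E' R'
    Nonempty (↥M.toSet ↪ₑ[LStd] ↥N.toSet)

theorem ZFSet.toSet_subset_iff {x y : ZFSet.{u}} : x.toSet ⊆ y.toSet ↔ x ⊆ y :=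
  ZFSet.coe_subset_coe

namespace VPAux

open ZFSet

/-- Members of von Neumann ordinals are von Neumann ordinals. -/
theorem isOrdinal_of_mem {x y : ZFSet.{u}} (hx : x.IsOrdinal) (hy : y ∈ x) : y.IsOrdinal := by
  refine ⟨fun z hz w hw => ?_, fun {a b c} hab hbc hcy => ?_⟩
  · exact hx.mem_trans' hw hz hy
  · exact hx.mem_trans' hab hbc (hx.mem_trans hcy hy)

/-- `typein` specialised to `o.ToType`, with the well-order instance given explicitly. -/
noncomputable def tin (o : Ordinal.{u}) (i : o.ToType) : Ordinal.{u} :=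
  @Ordinal.typein o.ToType (· < ·) isWellOrder_lt i

theorem tin_lt {o : Ordinal.{u}} (i : o.ToType) : tin o i < o :=
  Ordinal.typein_lt_self i

theorem tin_surj {o p : Ordinal.{u}} (hp : p < o) : ∃ i : o.ToType, tin o i = p :=
  @Ordinal.typein_surj o.ToType (· < ·) isWellOrder_lt p (by rwa [Ordinal.type_toType])

theorem lsub_tin (o : Ordinal.{u}) : Ordinal.lsub.{u, u} (tin o) = o :=
  Ordinal.lsub_typein o

/-- The canonical von Neumann ordinal of a given `Ordinal` rank. -/
noncomputable def ofOrd : Ordinal.{u} → ZFSet.{u} :=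
  Ordinal.lt_wf.fix fun o IH =>
    ZFSet.range fun i : o.ToType => IH _ (tin_lt i)

theorem ofOrd_def (o : Ordinal.{u}) :
    ofOrd o = ZFSet.range fun i : o.ToType => ofOrd (tin o i) :=
  Ordinal.lt_wf.fix_eq _ o

theorem mem_ofOrd {x : ZFSet.{u}} {o : Ordinal.{u}} :
    x ∈ ofOrd o ↔ ∃ p < o, x = ofOrd p := by
  rw [ofOrd_def, ZFSet.mem_range]
  constructor
  · rintro ⟨i, rfl⟩
    exact ⟨_, tin_lt i, rfl⟩
  · rintro ⟨p, hp, rfl⟩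
    obtain ⟨i, hi⟩ := tin_surj hp
    exact ⟨i, show ofOrd (tin o i) = ofOrd p by rw [hi]⟩

theorem rank_ofOrd : ∀ o : Ordinal.{u}, (ofOrd o).rank = o := by
  intro o
  induction o using Ordinal.induction with
  | h o IH =>
    rw [ofOrd_def, ZFSet.rank_range]
    have h2 : (fun i : o.ToType => (ofOrd (tin o i)).rank) = tin o :=
      funext fun i => IH _ (tin_lt i)
    rw [show (⨆ i, Order.succ (ofOrd (tin o i)).rank) =
      Ordinal.lsub.{u, u} (fun i => (ofOrd (tin o i)).rank) from rfl, h2, lsub_tin]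

theorem isTransitive_ofOrd (o : Ordinal.{u}) : (ofOrd o).IsTransitive := by
  intro y hy z hz
  obtain ⟨p, hp, rfl⟩ := mem_ofOrd.1 hy
  obtain ⟨q, hq, rfl⟩ := mem_ofOrd.1 hz
  exact mem_ofOrd.2 ⟨q, hq.trans hp, rfl⟩

theorem isOrdinal_ofOrd (o : Ordinal.{u}) : (ofOrd o).IsOrdinal := by
  refine ⟨isTransitive_ofOrd o, fun {y z w} hyz hzw hw => ?_⟩
  obtain ⟨p, hp, rfl⟩ := mem_ofOrd.1 hw
  exact isTransitive_ofOrd p _ hzw hyz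

/-- Every ordinal strictly below the rank of a von Neumann ordinal is attained as the rank of
one of its members. -/
theorem exists_mem_rank_eq : ∀ {x : ZFSet.{u}}, x.IsOrdinal → ∀ {o : Ordinal.{u}}, o < x.rank →
    ∃ y ∈ x, y.rank = o := by
  intro x
  induction x using ZFSet.inductionOn with
  | _ x IH =>
    intro hx o ho
    obtain ⟨y, hyx, hy⟩ := ZFSet.lt_rank_iff.1 ho
    rcases eq_or_lt_of_le hy with h | h
    · exact ⟨y, hyx, h.symm⟩
    · obtain ⟨z, hzy, hz⟩ := IH y hyx (isOrdinal_of_mem hx hyx) h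
      exact ⟨z, hx.mem_trans hzy hyx, hz⟩

/-- Every von Neumann ordinal is the canonical one of its rank. -/
theorem eq_ofOrd_rank : ∀ {x : ZFSet.{u}}, x.IsOrdinal → x = ofOrd x.rank := by
  intro x
  induction x using ZFSet.inductionOn with
  | _ x IH =>
    intro hx
    apply ZFSet.ext
    intro y
    constructor
    · intro hy
      exact mem_ofOrd.2 ⟨y.rank, ZFSet.rank_lt_of_mem hy, IH y hy (isOrdinal_of_mem hx hy)⟩
    · intro hy
      obtain ⟨p, hp, rfl⟩ := mem_ofOrd.1 hy
      obtain ⟨z, hzx, hz⟩ := exists_mem_rank_eq hx hp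
      have h2 := IH z hzx (isOrdinal_of_mem hx hzx)
      rw [hz] at h2
      rwa [← h2]

theorem mem_of_rank_lt {x y : ZFSet.{u}} (hx : x.IsOrdinal) (hy : y.IsOrdinal)
    (h : x.rank < y.rank) : x ∈ y := by
  have : ofOrd x.rank ∈ ofOrd y.rank := mem_ofOrd.2 ⟨x.rank, h, rfl⟩
  rwa [← eq_ofOrd_rank hx, ← eq_ofOrd_rank hy] at this

/-- The cardinality of (the underlying set of) a von Neumann ordinal is the cardinality of
its rank. -/
theorem mk_toSet_of_isOrdinal {x : ZFSet.{u}} (hx : x.IsOrdinal) :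
    Cardinal.mk x.toSet = Cardinal.lift.{u + 1} x.rank.card := by
  rw [← Ordinal.mk_Iio_ordinal]
  refine Cardinal.mk_congr (Equiv.ofBijective
    (fun y : x.toSet => (⟨(y : ZFSet).rank, ZFSet.rank_lt_of_mem y.2⟩ : Set.Iio x.rank))
    ⟨?_, ?_⟩)
  · rintro ⟨a, ha⟩ ⟨b, hb⟩ hab
    have h : ZFSet.rank a = ZFSet.rank b := congrArg Subtype.val hab
    have ha' := isOrdinal_of_mem hx ha
    have hb' := isOrdinal_of_mem hx hb
    refine Subtype.ext (show a = b from ?_)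
    rw [eq_ofOrd_rank ha', eq_ofOrd_rank hb', h]
  · rintro ⟨o, ho⟩
    obtain ⟨y, hy, hr⟩ := exists_mem_rank_eq hx ho
    exact ⟨⟨y, hy⟩, Subtype.ext hr⟩

/-- The `o`-th level of the von Neumann hierarchy, as a ZFC set. -/
noncomputable def Vlev : Ordinal.{u} → ZFSet.{u} :=
  Ordinal.lt_wf.fix fun o IH =>
    ZFSet.sUnion (ZFSet.range fun i : o.ToType => ZFSet.powerset (IH _ (tin_lt i)))

theorem Vlev_def (o : Ordinal.{u}) :
    Vlev o = ZFSet.sUnion (ZFSet.range fun i : o.ToType =>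
      ZFSet.powerset (Vlev (tin o i))) :=
  Ordinal.lt_wf.fix_eq _ o

theorem mem_Vlev {x : ZFSet.{u}} {o : Ordinal.{u}} :
    x ∈ Vlev o ↔ ∃ p < o, x ⊆ Vlev p := by
  rw [Vlev_def, ZFSet.mem_sUnion]
  constructor
  · rintro ⟨w, hw, hxw⟩
    obtain ⟨i, rfl⟩ := ZFSet.mem_range.1 hw
    exact ⟨_, tin_lt i, ZFSet.mem_powerset.1 hxw⟩
  · rintro ⟨p, hp, hsub⟩
    obtain ⟨i, hi⟩ := tin_surj hp
    exact ⟨_, ZFSet.mem_range.2 ⟨i, rfl⟩, ZFSet.mem_powerset.2 (by rwa [hi])⟩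

theorem mem_Vlev_of_rank_lt : ∀ {x : ZFSet.{u}} {o : Ordinal.{u}}, x.rank < o → x ∈ Vlev o := by
  intro x
  induction x using ZFSet.inductionOn with
  | _ x IH =>
    intro o ho
    exact mem_Vlev.2 ⟨x.rank, ho, fun y hy => IH y hy (ZFSet.rank_lt_of_mem hy)⟩

/-- A proper class contains sets of arbitrarily large rank. -/
theorem exists_mem_rank_ge {B : Set ZFSet.{u}} (hB : IsProperClass B) (o : Ordinal.{u}) :
    ∃ S ∈ B, o ≤ S.rank := by
  by_contra hcon
  push_neg at hcon
  refine hB ⟨ZFSet.sep (· ∈ B) (Vlev o), Set.ext fun x => ?_⟩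
  rw [ZFSet.mem_toSet, ZFSet.mem_sep]
  exact ⟨fun h' => h'.2, fun h' => ⟨mem_Vlev_of_rank_lt (hcon x h'), h'⟩⟩


/-! ### `L_std` formulas for relativization -/

open FirstOrder.Language

section Formulas

variable {α : Type} {n : ℕ}

/-- Variable term. -/
def vt (k : α ⊕ Fin n) : LStd.Term (α ⊕ Fin n) := Term.var k

/-- Atomic membership formula. -/
def memF (a b : α ⊕ Fin n) : LStd.BoundedFormula α n :=
  BoundedFormula.rel LStdRel.eps ![vt a, vt b]

/-- Atomic `R`-predicate formula. -/
def rF (a : α ⊕ Fin n) : LStd.BoundedFormula α n :=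
  BoundedFormula.rel LStdRel.r ![vt a]

/-- Atomic equality formula. -/
def eqF (a b : α ⊕ Fin n) : LStd.BoundedFormula α n := Term.bdEqual (vt a) (vt b)

/-- Lift a variable index through one quantifier. -/
def liftIdx (k : α ⊕ Fin n) : α ⊕ Fin (n + 1) := Sum.map id Fin.castSucc k

/-- The innermost bound variable. -/
def bvar : α ⊕ Fin (n + 1) := Sum.inr (Fin.last n)

/-- `w = {x}`. -/
def singF (w x : α ⊕ Fin n) : LStd.BoundedFormula α n :=
  ((memF bvar (liftIdx w)).iff (eqF bvar (liftIdx x))).all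

/-- `w = {x, y}`. -/
def pr2F (w x y : α ⊕ Fin n) : LStd.BoundedFormula α n :=
  ((memF bvar (liftIdx w)).iff ((eqF bvar (liftIdx x)) ⊔ (eqF bvar (liftIdx y)))).all

/-- First existential witness in `pairF`. -/
def w1Idx : α ⊕ Fin (n + 2) := Sum.inr (Fin.last n).castSucc

/-- Second existential witness in `pairF`. -/
def w2Idx : α ⊕ Fin (n + 2) := Sum.inr (Fin.last (n + 1))

/-- `z = ⟨x, y⟩` (Kuratowski pair). -/
def pairF (x y z : α ⊕ Fin n) : LStd.BoundedFormula α n :=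
  ((memF w1Idx (liftIdx (liftIdx z)) ⊓
    (memF w2Idx (liftIdx (liftIdx z)) ⊓
      (singF w1Idx (liftIdx (liftIdx x)) ⊓
        (pr2F w2Idx (liftIdx (liftIdx x)) (liftIdx (liftIdx y)) ⊓
          ((memF bvar (liftIdx (liftIdx (liftIdx z)))).imp
            ((eqF bvar (liftIdx w1Idx)) ⊔ (eqF bvar (liftIdx w2Idx)))).all)))).ex).ex

/-- `⟨x, y⟩ ∈ e`. -/
def relMemF (x y e : α ⊕ Fin n) : LStd.BoundedFormula α n :=
  ((memF bvar (liftIdx e)) ⊓ pairF (liftIdx x) (liftIdx y) bvar).ex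

end Formulas

/-! ### Semantics of these formulas over `VStructure` -/

/-- The domain of `VStructure η A`. -/
abbrev Dom (η : Ordinal.{u}) : Type (u + 1) := {x : ZFSet.{u} // x.rank < η}

/-- Realization over `VStructure η A`, with the instance supplied explicitly. -/
def VRealize (η : Ordinal.{u}) (A : Set ZFSet.{u}) {α : Type} {n : ℕ}
    (φ : LStd.BoundedFormula α n) (v : α → Dom η) (xs : Fin n → Dom η) : Prop :=
  @FirstOrder.Language.BoundedFormula.Realize LStd _ (VStructure η A) α n φ v xs

section Semantics

variable {η : Ordinal.{u}} {A : Set ZFSet.{u}} {α : Type} {n : ℕ}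
  {v : α → Dom η} {xs : Fin n → Dom η}

theorem VRealize_falsum : VRealize η A (BoundedFormula.falsum : LStd.BoundedFormula α n) v xs ↔
    False := Iff.rfl

theorem VRealize_imp {φ ψ : LStd.BoundedFormula α n} :
    VRealize η A (φ.imp ψ) v xs ↔ (VRealize η A φ v xs → VRealize η A ψ v xs) := by
  letI := VStructure η A
  exact BoundedFormula.realize_imp

theorem VRealize_inf {φ ψ : LStd.BoundedFormula α n} :
    VRealize η A (φ ⊓ ψ) v xs ↔ (VRealize η A φ v xs ∧ VRealize η A ψ v xs) := by
  letI := VStructure η A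
  exact BoundedFormula.realize_inf

theorem VRealize_sup {φ ψ : LStd.BoundedFormula α n} :
    VRealize η A (φ ⊔ ψ) v xs ↔ (VRealize η A φ v xs ∨ VRealize η A ψ v xs) := by
  letI := VStructure η A
  exact BoundedFormula.realize_sup

theorem VRealize_iff {φ ψ : LStd.BoundedFormula α n} :
    VRealize η A (φ.iff ψ) v xs ↔ (VRealize η A φ v xs ↔ VRealize η A ψ v xs) := by
  letI := VStructure η A
  exact BoundedFormula.realize_iff

theorem VRealize_all {φ : LStd.BoundedFormula α (n + 1)} :
    VRealize η A φ.all v xs ↔ ∀ d : Dom η, VRealize η A φ v (Fin.snoc xs d) := by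
  letI := VStructure η A
  exact BoundedFormula.realize_all

theorem VRealize_ex {φ : LStd.BoundedFormula α (n + 1)} :
    VRealize η A φ.ex v xs ↔ ∃ d : Dom η, VRealize η A φ v (Fin.snoc xs d) := by
  letI := VStructure η A
  exact BoundedFormula.realize_ex

theorem VRealize_memF {a b : α ⊕ Fin n} :
    VRealize η A (memF a b) v xs ↔ (Sum.elim v xs a).1 ∈ (Sum.elim v xs b).1 :=
  Iff.rfl

theorem VRealize_rF {a : α ⊕ Fin n} :
    VRealize η A (rF a) v xs ↔ (Sum.elim v xs a).1 ∈ A :=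
  Iff.rfl

theorem VRealize_eqF {a b : α ⊕ Fin n} :
    VRealize η A (eqF a b) v xs ↔ (Sum.elim v xs a).1 = (Sum.elim v xs b).1 := by
  show Sum.elim v xs a = Sum.elim v xs b ↔ _
  exact Subtype.ext_iff

theorem elim_snoc_liftIdx {β : Type (u + 1)} (v : α → β) (xs : Fin n → β) (d : β)
    (k : α ⊕ Fin n) : Sum.elim v (Fin.snoc xs d) (liftIdx k) = Sum.elim v xs k := by
  cases k with
  | inl g => rfl
  | inr i => simp [liftIdx, Fin.snoc_castSucc]

theorem elim_snoc_bvar {β : Type (u + 1)} (v : α → β) (xs : Fin n → β) (d : β) :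
    Sum.elim v (Fin.snoc xs d) (bvar : α ⊕ Fin (n + 1)) = d := by
  simp [bvar]

theorem elim_snoc2_w1 {β : Type (u + 1)} (v : α → β) (xs : Fin n → β) (d1 d2 : β) :
    Sum.elim v (Fin.snoc (Fin.snoc xs d1) d2) (w1Idx : α ⊕ Fin (n + 2)) = d1 := by
  simp [w1Idx]

theorem elim_snoc2_w2 {β : Type (u + 1)} (v : α → β) (xs : Fin n → β) (d1 d2 : β) :
    Sum.elim v (Fin.snoc (Fin.snoc xs d1) d2) (w2Idx : α ⊕ Fin (n + 2)) = d2 := by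
  simp [w2Idx]

theorem VRealize_singF {w x : α ⊕ Fin n} :
    VRealize η A (singF w x) v xs ↔
      (Sum.elim v xs w).1 = {(Sum.elim v xs x).1} := by
  rw [singF, VRealize_all]
  have h : ∀ d : Dom η,
      VRealize η A ((memF bvar (liftIdx w)).iff (eqF bvar (liftIdx x))) v (Fin.snoc xs d) ↔
        (d.1 ∈ (Sum.elim v xs w).1 ↔ d.1 = (Sum.elim v xs x).1) := by
    intro d
    rw [VRealize_iff, VRealize_memF, VRealize_eqF]
    rw [elim_snoc_liftIdx, elim_snoc_liftIdx, elim_snoc_bvar]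
  simp only [h]
  constructor
  · intro h2
    apply ZFSet.ext
    intro z
    rw [ZFSet.mem_singleton]
    constructor
    · intro hz
      exact (h2 ⟨z, (ZFSet.rank_lt_of_mem hz).trans (Sum.elim v xs w).2⟩).1 hz
    · rintro rfl
      exact (h2 (Sum.elim v xs x)).2 rfl
  · intro h2 d
    rw [h2, ZFSet.mem_singleton]

theorem VRealize_pr2F {w x y : α ⊕ Fin n} :
    VRealize η A (pr2F w x y) v xs ↔
      (Sum.elim v xs w).1 = {(Sum.elim v xs x).1, (Sum.elim v xs y).1} := by
  rw [pr2F, VRealize_all]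
  have h : ∀ d : Dom η,
      VRealize η A ((memF bvar (liftIdx w)).iff
        ((eqF bvar (liftIdx x)) ⊔ (eqF bvar (liftIdx y)))) v (Fin.snoc xs d) ↔
        (d.1 ∈ (Sum.elim v xs w).1 ↔
          (d.1 = (Sum.elim v xs x).1 ∨ d.1 = (Sum.elim v xs y).1)) := by
    intro d
    rw [VRealize_iff, VRealize_memF, VRealize_sup, VRealize_eqF, VRealize_eqF]
    rw [elim_snoc_liftIdx, elim_snoc_liftIdx, elim_snoc_liftIdx, elim_snoc_bvar]
  simp only [h]
  constructor
  · intro h2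
    apply ZFSet.ext
    intro z
    rw [ZFSet.mem_pair]
    constructor
    · intro hz
      exact (h2 ⟨z, (ZFSet.rank_lt_of_mem hz).trans (Sum.elim v xs w).2⟩).1 hz
    · rintro (rfl | rfl)
      · exact (h2 (Sum.elim v xs x)).2 (Or.inl rfl)
      · exact (h2 (Sum.elim v xs y)).2 (Or.inr rfl)
  · intro h2 d
    rw [h2, ZFSet.mem_pair]

theorem mem_zfPair_iff {x y z : ZFSet.{u}} :
    z ∈ ZFSet.pair x y ↔ z = {x} ∨ z = {x, y} := by
  simp [ZFSet.pair, ZFSet.mem_pair]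

theorem singleton_mem_zfPair (x y : ZFSet.{u}) : {x} ∈ ZFSet.pair x y :=
  mem_zfPair_iff.2 (Or.inl rfl)

theorem pair2_mem_zfPair (x y : ZFSet.{u}) : ({x, y} : ZFSet) ∈ ZFSet.pair x y :=
  mem_zfPair_iff.2 (Or.inr rfl)

theorem VRealize_pairF {x y z : α ⊕ Fin n} :
    VRealize η A (pairF x y z) v xs ↔
      (Sum.elim v xs z).1 = ZFSet.pair (Sum.elim v xs x).1 (Sum.elim v xs y).1 := by
  rw [pairF, VRealize_ex]
  have key : ∀ d1 : Dom η,
    (VRealize η A ((memF w1Idx (liftIdx (liftIdx z)) ⊓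
      (memF w2Idx (liftIdx (liftIdx z)) ⊓
        (singF w1Idx (liftIdx (liftIdx x)) ⊓
          (pr2F w2Idx (liftIdx (liftIdx x)) (liftIdx (liftIdx y)) ⊓
            ((memF bvar (liftIdx (liftIdx (liftIdx z)))).imp
              ((eqF bvar (liftIdx w1Idx)) ⊔ (eqF bvar (liftIdx w2Idx)))).all)))).ex)
        v (Fin.snoc xs d1)) ↔
      ∃ d2 : Dom η, d1.1 ∈ (Sum.elim v xs z).1 ∧ d2.1 ∈ (Sum.elim v xs z).1 ∧
        d1.1 = {(Sum.elim v xs x).1} ∧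
        d2.1 = {(Sum.elim v xs x).1, (Sum.elim v xs y).1} ∧
        ∀ d3 : Dom η, d3.1 ∈ (Sum.elim v xs z).1 → (d3.1 = d1.1 ∨ d3.1 = d2.1) := by
    intro d1
    rw [VRealize_ex]
    apply exists_congr
    intro d2
    rw [VRealize_inf, VRealize_inf, VRealize_inf, VRealize_inf,
      VRealize_memF, VRealize_memF, VRealize_singF, VRealize_pr2F, VRealize_all]
    simp only [elim_snoc_liftIdx, elim_snoc_bvar, elim_snoc2_w1, elim_snoc2_w2]
    apply and_congr Iff.rfl
    apply and_congr Iff.rfl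
    apply and_congr Iff.rfl
    apply and_congr Iff.rfl
    apply forall_congr'
    intro d3
    rw [VRealize_imp, VRealize_memF, VRealize_sup, VRealize_eqF, VRealize_eqF]
    simp only [elim_snoc_liftIdx, elim_snoc_bvar, elim_snoc2_w1, elim_snoc2_w2]
  simp only [key]
  constructor
  · rintro ⟨d1, d2, h1Z, h2Z, h1e, h2e, hall⟩
    apply ZFSet.ext
    intro t
    rw [mem_zfPair_iff]
    constructor
    · intro ht
      rcases hall ⟨t, (ZFSet.rank_lt_of_mem ht).trans (Sum.elim v xs z).2⟩ ht with h | h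
      · replace h : t = d1.1 := h
        rw [h, h1e]; exact Or.inl rfl
      · replace h : t = d2.1 := h
        rw [h, h2e]; exact Or.inr rfl
    · rintro (rfl | rfl)
      · rwa [← h1e]
      · rwa [← h2e]
  · intro hZeq
    have hrz := (Sum.elim v xs z).2
    have h1m : ({(Sum.elim v xs x).1} : ZFSet) ∈ (Sum.elim v xs z).1 := by
      rw [hZeq]; exact singleton_mem_zfPair _ _
    have h2m : ({(Sum.elim v xs x).1, (Sum.elim v xs y).1} : ZFSet) ∈ (Sum.elim v xs z).1 := by
      rw [hZeq]; exact pair2_mem_zfPair _ _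
    refine ⟨⟨_, (ZFSet.rank_lt_of_mem h1m).trans hrz⟩,
      ⟨_, (ZFSet.rank_lt_of_mem h2m).trans hrz⟩, h1m, h2m, rfl, rfl, ?_⟩
    intro d3 hd3
    rw [hZeq, mem_zfPair_iff] at hd3
    exact hd3

theorem VRealize_relMemF {x y e : α ⊕ Fin n} :
    VRealize η A (relMemF x y e) v xs ↔
      ZFSet.pair (Sum.elim v xs x).1 (Sum.elim v xs y).1 ∈ (Sum.elim v xs e).1 := by
  rw [relMemF, VRealize_ex]
  have h : ∀ d : Dom η,
      VRealize η A ((memF bvar (liftIdx e)) ⊓ pairF (liftIdx x) (liftIdx y) bvar)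
        v (Fin.snoc xs d) ↔
      (d.1 ∈ (Sum.elim v xs e).1 ∧
        d.1 = ZFSet.pair (Sum.elim v xs x).1 (Sum.elim v xs y).1) := by
    intro d
    rw [VRealize_inf, VRealize_memF, VRealize_pairF]
    simp only [elim_snoc_liftIdx, elim_snoc_bvar]
  simp only [h]
  constructor
  · rintro ⟨d, hd, hde⟩
    rwa [← hde]
  · intro hmem
    exact ⟨⟨_, (ZFSet.rank_lt_of_mem hmem).trans (Sum.elim v xs e).2⟩, hmem, rfl⟩

theorem VFRealize_eq_VRealize {φ : LStd.Formula α} {v : α → Dom η} :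
    @FirstOrder.Language.Formula.Realize LStd _ (VStructure η A) α φ v ↔
      VRealize η A φ v default :=
  Iff.rfl

theorem VFRealize_rF {a : α} {v : α → Dom η} :
    @FirstOrder.Language.Formula.Realize LStd _ (VStructure η A) α
      (rF (Sum.inl a) : LStd.BoundedFormula α 0) v ↔ (v a).1 ∈ A := by
  rw [VFRealize_eq_VRealize, VRealize_rF]
  exact Iff.rfl

theorem VFRealize_memF {a b : α} {v : α → Dom η} :
    @FirstOrder.Language.Formula.Realize LStd _ (VStructure η A) α
      (memF (Sum.inl a) (Sum.inl b) : LStd.BoundedFormula α 0) v ↔ (v a).1 ∈ (v b).1 := by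
  rw [VFRealize_eq_VRealize, VRealize_memF]
  exact Iff.rfl

theorem VFRealize_pairF {a b c : α} {v : α → Dom η} :
    @FirstOrder.Language.Formula.Realize LStd _ (VStructure η A) α
      (pairF (Sum.inl a) (Sum.inl b) (Sum.inl c) : LStd.BoundedFormula α 0) v ↔
      (v c).1 = ZFSet.pair (v a).1 (v b).1 := by
  rw [VFRealize_eq_VRealize, VRealize_pairF]
  exact Iff.rfl

end Semantics



/-! ### Relativization of `L_std`-formulas to coded structures -/

/-- The variable of an `L_std`-term (the language has no function symbols). -/
def varIdx {β : Type*} : LStd.Term β → β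
  | .var k => k
  | .func f _ => Empty.elim f

theorem realize_term_var {β : Type*} {X : Type (u + 1)} {S : LStd.Structure X}
    (f : β → X) (t : LStd.Term β) :
    @FirstOrder.Language.Term.realize LStd X S β f t = f (varIdx t) := by
  cases t with
  | var k => rfl
  | func g ts => exact Empty.elim g

/-- Reindex free variables to make room for the three parameters. -/
def reIdx {γ : Type} {n : ℕ} (k : γ ⊕ Fin n) : (γ ⊕ Fin 3) ⊕ Fin n := Sum.map Sum.inl id k

/-- Parameter index for the domain `M`. -/
def pMIdx {γ : Type} {n : ℕ} : (γ ⊕ Fin 3) ⊕ Fin n := Sum.inl (Sum.inr 0)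

/-- Parameter index for the membership relation `E`. -/
def pEIdx {γ : Type} {n : ℕ} : (γ ⊕ Fin 3) ⊕ Fin n := Sum.inl (Sum.inr 1)

/-- Parameter index for the predicate `R`. -/
def pRIdx {γ : Type} {n : ℕ} : (γ ⊕ Fin 3) ⊕ Fin n := Sum.inl (Sum.inr 2)

/-- Relativization of an atomic formula. -/
def relAtom {γ : Type} {n l : ℕ} (Rl : LStdRel l) (ts : Fin l → LStd.Term (γ ⊕ Fin n)) :
    LStd.BoundedFormula (γ ⊕ Fin 3) n :=
  match Rl, ts with
  | .eps, ts => relMemF (reIdx (varIdx (ts 0))) (reIdx (varIdx (ts 1))) pEIdx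
  | .r, ts => memF (reIdx (varIdx (ts 0))) pRIdx

/-- Relativization of an `L_std`-formula to the coded structure with parameters
`M` (domain), `E` (membership) and `R` (predicate). -/
def relf {γ : Type} : ∀ {n : ℕ}, LStd.BoundedFormula γ n → LStd.BoundedFormula (γ ⊕ Fin 3) n
  | _, .falsum => .falsum
  | _, .equal t₁ t₂ => eqF (reIdx (varIdx t₁)) (reIdx (varIdx t₂))
  | _, .rel Rl ts => relAtom Rl ts
  | _, .imp φ ψ => (relf φ).imp (relf ψ)
  | _, .all φ => ((memF bvar pMIdx).imp (relf φ)).all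

/-- Map an element of the coded domain into the domain of the `V`-structure. -/
def embD {η : Ordinal.{u}} {M : ZFSet.{u}} (hM : M.rank < η) (y : M.toSet) : Dom η :=
  ⟨y.1, (ZFSet.rank_lt_of_mem ((ZFSet.mem_toSet _ _).1 y.2)).trans hM⟩

/-- The parameter valuation. -/
def par {η : Ordinal.{u}} {M E R : ZFSet.{u}} (hM : M.rank < η) (hE : E.rank < η)
    (hR : R.rank < η) : Fin 3 → Dom η := ![⟨M, hM⟩, ⟨E, hE⟩, ⟨R, hR⟩]

section Soundness

variable {η : Ordinal.{u}} {A : Set ZFSet.{u}} {M E R : ZFSet.{u}}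
  {hM : M.rank < η} {hE : E.rank < η} {hR : R.rank < η}

theorem elim_reIdx {γ : Type} {n : ℕ} (v : γ → M.toSet) (xs : Fin n → M.toSet) (k : γ ⊕ Fin n) :
    Sum.elim (Sum.elim (fun g => embD hM (v g)) (par hM hE hR)) (fun i => embD hM (xs i))
      (reIdx k) = embD hM (Sum.elim v xs k) := by
  cases k with
  | inl g => rfl
  | inr i => rfl

theorem elim_pE {γ : Type} {n : ℕ} (v : γ → M.toSet) (xs : Fin n → M.toSet) :
    Sum.elim (Sum.elim (fun g => embD hM (v g)) (par hM hE hR)) (fun i => embD hM (xs i))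
      (pEIdx : (γ ⊕ Fin 3) ⊕ Fin n) = ⟨E, hE⟩ :=
  rfl

theorem elim_pR {γ : Type} {n : ℕ} (v : γ → M.toSet) (xs : Fin n → M.toSet) :
    Sum.elim (Sum.elim (fun g => embD hM (v g)) (par hM hE hR)) (fun i => embD hM (xs i))
      (pRIdx : (γ ⊕ Fin 3) ⊕ Fin n) = ⟨R, hR⟩ :=
  rfl

theorem embD_snoc {n : ℕ} (xs : Fin n → M.toSet) (a : M.toSet) :
    (fun i : Fin (n + 1) => embD hM ((Fin.snoc xs a : Fin (n + 1) → M.toSet) i)) =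
      Fin.snoc (fun i => embD hM (xs i)) (embD hM a) := by
  funext i
  cases i using Fin.lastCases with
  | last => simp
  | cast i => simp [Fin.snoc_castSucc]

theorem relf_sound :
    ∀ {γ : Type} {n : ℕ} (φ : LStd.BoundedFormula γ n) (v : γ → M.toSet)
      (xs : Fin n → M.toSet),
      (@FirstOrder.Language.BoundedFormula.Realize LStd _ (codedStructure M E R) γ n φ v xs) ↔
      VRealize η A (relf φ) (Sum.elim (fun g => embD hM (v g)) (par hM hE hR))
        (fun i => embD hM (xs i)) := by
  intro γ n φ
  letI : LStd.Structure M.toSet := codedStructure M E R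
  induction φ with
  | falsum => intro v xs; exact Iff.rfl
  | equal t₁ t₂ =>
    intro v xs
    show Term.realize (Sum.elim v xs) t₁ = Term.realize (Sum.elim v xs) t₂ ↔
      VRealize η A (eqF (reIdx (varIdx t₁)) (reIdx (varIdx t₂)))
        (Sum.elim (fun g => embD hM (v g)) (par hM hE hR)) (fun i => embD hM (xs i))
    rw [VRealize_eqF, elim_reIdx, elim_reIdx, realize_term_var, realize_term_var]
    exact ⟨fun h2 => by rw [h2], fun h2 => Subtype.ext h2⟩
  | rel Rl ts =>
    intro v xs
    cases Rl with
    | eps =>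
      show ZFSet.pair (Term.realize (Sum.elim v xs) (ts 0)).1
          (Term.realize (Sum.elim v xs) (ts 1)).1 ∈ E ↔
        VRealize η A (relMemF (reIdx (varIdx (ts 0))) (reIdx (varIdx (ts 1))) pEIdx)
          (Sum.elim (fun g => embD hM (v g)) (par hM hE hR)) (fun i => embD hM (xs i))
      rw [VRealize_relMemF, elim_reIdx, elim_reIdx, elim_pE, realize_term_var,
        realize_term_var]
      exact Iff.rfl
    | r =>
      show (Term.realize (Sum.elim v xs) (ts 0)).1 ∈ R ↔
        VRealize η A (memF (reIdx (varIdx (ts 0))) pRIdx)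
          (Sum.elim (fun g => embD hM (v g)) (par hM hE hR)) (fun i => embD hM (xs i))
      rw [VRealize_memF, elim_reIdx, elim_pR, realize_term_var]
      exact Iff.rfl
  | imp φ ψ ih1 ih2 =>
    intro v xs
    show ((@FirstOrder.Language.BoundedFormula.Realize LStd _ (codedStructure M E R) _ _ φ v xs)
        → (@FirstOrder.Language.BoundedFormula.Realize LStd _ (codedStructure M E R) _ _ ψ v xs))
      ↔ VRealize η A ((relf φ).imp (relf ψ))
          (Sum.elim (fun g => embD hM (v g)) (par hM hE hR)) (fun i => embD hM (xs i))
    rw [VRealize_imp]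
    exact imp_congr (ih1 v xs) (ih2 v xs)
  | all φ ih =>
    intro v xs
    show (∀ a : M.toSet,
        @FirstOrder.Language.BoundedFormula.Realize LStd _ (codedStructure M E R) _ _ φ v
          (Fin.snoc xs a)) ↔
      VRealize η A (((memF bvar pMIdx).imp (relf φ)).all)
        (Sum.elim (fun g => embD hM (v g)) (par hM hE hR)) (fun i => embD hM (xs i))
    rw [VRealize_all]
    constructor
    · intro hL d
      rw [VRealize_imp, VRealize_memF]
      intro hd
      rw [elim_snoc_bvar] at hd
      have hd' : d.1 ∈ M := hd
      set a : M.toSet := ⟨d.1, (ZFSet.mem_toSet _ _).2 hd'⟩ with ha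
      have h2 := (ih v (Fin.snoc xs a)).1 (hL a)
      rw [embD_snoc] at h2
      have hda : embD hM a = d := Subtype.ext rfl
      rwa [hda] at h2
    · intro hR2 a
      have h3 := hR2 (embD hM a)
      rw [VRealize_imp, VRealize_memF, elim_snoc_bvar] at h3
      have h5 := h3 ((ZFSet.mem_toSet _ _).1 a.2)
      apply (ih v (Fin.snoc xs a)).2
      rwa [embD_snoc]

end Soundness



/-! ### Rank estimates for Kuratowski pairs and codes -/

theorem rank_lt_kpair_left (a b : ZFSet.{u}) : a.rank < (ZFSet.pair a b).rank :=
  (ZFSet.rank_lt_of_mem (ZFSet.mem_singleton.2 rfl : a ∈ ({a} : ZFSet))).trans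
    (ZFSet.rank_lt_of_mem (singleton_mem_zfPair a b))

theorem rank_lt_kpair_right (a b : ZFSet.{u}) : b.rank < (ZFSet.pair a b).rank :=
  (ZFSet.rank_lt_of_mem (ZFSet.mem_pair.2 (Or.inr rfl) : b ∈ ({a, b} : ZFSet))).trans
    (ZFSet.rank_lt_of_mem (pair2_mem_zfPair a b))

theorem rank_kpair_le (a b : ZFSet.{u}) :
    (ZFSet.pair a b).rank ≤ Order.succ (Order.succ (max a.rank b.rank)) := by
  show ZFSet.rank {{a}, {a, b}} ≤ _
  rw [ZFSet.rank_pair, ZFSet.rank_singleton, ZFSet.rank_pair]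
  apply max_le
  · exact Order.succ_le_succ (Order.succ_le_succ (le_max_left _ _))
  · exact Order.succ_le_succ (max_le
      (Order.succ_le_succ (le_max_left _ _)) (Order.succ_le_succ (le_max_right _ _)))

theorem rank_code_le {δ E R S : ZFSet.{u}} (hS : S = δ.pair (E.pair R))
    (hE : ∀ p ∈ E, ∃ a ∈ δ, ∃ b ∈ δ, p = a.pair b) (hR : R ⊆ δ) :
    S.rank ≤ Order.succ (Order.succ (Order.succ (Order.succ (Order.succ
      (Order.succ δ.rank))))) := by
  have hEr : E.rank ≤ Order.succ (Order.succ δ.rank) := by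
    rw [ZFSet.rank_le_iff]
    intro p hp
    obtain ⟨a, ha, b, hb, rfl⟩ := hE p hp
    calc (a.pair b).rank ≤ Order.succ (Order.succ (max a.rank b.rank)) := rank_kpair_le a b
      _ < Order.succ (Order.succ δ.rank) := by
        apply Order.succ_lt_succ
        apply Order.succ_lt_succ
        exact max_lt (ZFSet.rank_lt_of_mem ha) (ZFSet.rank_lt_of_mem hb)
  have hRr : R.rank ≤ δ.rank := ZFSet.rank_mono hR
  have hWr : (E.pair R).rank ≤ Order.succ (Order.succ (Order.succ (Order.succ δ.rank))) := by
    refine (rank_kpair_le E R).trans ?_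
    apply Order.succ_le_succ
    apply Order.succ_le_succ
    apply max_le
    · exact hEr
    · exact hRr.trans ((Order.le_succ _).trans (Order.succ_le_succ (Order.le_succ _)))
  rw [hS]
  refine (rank_kpair_le δ (E.pair R)).trans ?_
  apply Order.succ_le_succ
  apply Order.succ_le_succ
  apply max_le
  · exact (Order.le_succ _).trans ((Order.le_succ _).trans
      ((Order.le_succ _).trans (Order.le_succ _)))
  · exact hWr

end VPAux

/-- If for every proper class `A` there is an `A`-extendible cardinal, then for every proper
class `B` of ordinal `L_std`-structures there exist `M, N ∈ B` whose domains have different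
cardinalities and an `L_std`-elementary embedding `j : M → N`. -/
theorem ordinalClassVP_of_aExtendible
    (h : ∀ A : Set ZFSet.{u}, IsProperClass A → ∃ α : ZFSet.{u}, AExtendible A α) :
    ∀ B : Set ZFSet.{u}, IsProperClass B → (∀ x ∈ B, IsOrdinalLStdCode x) →
      ∃ M ∈ B, ∃ N ∈ B, ElemEmbeddableDiffCard M N := by
  intro B hB hcode
  classical
  obtain ⟨κ, hκcard, hκext⟩ := h B hB
  have hκord : κ.IsOrdinal := hκcard.1
  -- pick a structure of large rank in B
  obtain ⟨S, hSB, hSrank⟩ := VPAux.exists_mem_rank_ge hB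
    (Order.succ (Order.succ (Order.succ (Order.succ (Order.succ (Order.succ
      (Order.succ κ.rank)))))))
  obtain ⟨δ, E, R, hScode, hδord, hEp, hRs⟩ := hcode S hSB
  set W := E.pair R with hW
  have hδS : δ.rank < S.rank := by rw [hScode]; exact VPAux.rank_lt_kpair_left δ W
  have hWS : W.rank < S.rank := by rw [hScode]; exact VPAux.rank_lt_kpair_right δ W
  have hES : E.rank < W.rank := VPAux.rank_lt_kpair_left E R
  have hRS : R.rank < W.rank := VPAux.rank_lt_kpair_right E R
  have hcode_le := VPAux.rank_code_le hScode hEp hRs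
  -- κ.rank < δ.rank
  have hκδr : κ.rank < δ.rank := by
    by_contra hcon
    push_neg at hcon
    have h6 : Order.succ (Order.succ (Order.succ (Order.succ (Order.succ
        (Order.succ δ.rank))))) ≤ Order.succ (Order.succ (Order.succ (Order.succ
        (Order.succ (Order.succ κ.rank))))) := by
      exact Order.succ_le_succ (Order.succ_le_succ (Order.succ_le_succ (Order.succ_le_succ
        (Order.succ_le_succ (Order.succ_le_succ hcon)))))
    have h7 := hSrank.trans (hcode_le.trans h6)
    exact (Order.lt_succ _).not_ge h7
  have hκmemδ : κ ∈ δ := VPAux.mem_of_rank_lt hκord hδord hκδr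
  -- build η
  set ηo : Ordinal.{u} := (Order.succ S.rank.card).ord with hηo
  have hSηo : S.rank < ηo := Cardinal.lt_ord.2 (Order.lt_succ _)
  have hκS : κ.rank ≤ S.rank := by
    refine le_trans ?_ hSrank
    exact (Order.le_succ _).trans ((Order.le_succ _).trans ((Order.le_succ _).trans
      ((Order.le_succ _).trans ((Order.le_succ _).trans ((Order.le_succ _).trans
        (Order.le_succ _))))))
  set η : ZFSet.{u} := VPAux.ofOrd ηo with hηdef
  have hηord : η.IsOrdinal := VPAux.isOrdinal_ofOrd ηo
  have hηrank : η.rank = ηo := VPAux.rank_ofOrd ηo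
  have hκmemη : κ ∈ η :=
    VPAux.mem_of_rank_lt hκord hηord (by rw [hηrank]; exact lt_of_le_of_lt hκS hSηo)
  obtain ⟨ζ, hζord, hwit⟩ := hκext η hηord hκmemη
  obtain ⟨j, hfix, hcrit⟩ := hwit
  have hκrank : κ.rank < η.rank := by
    rw [hηrank]; exact lt_of_le_of_lt hκS hSηo
  obtain ⟨hjκne, hηjκ⟩ := hcrit hκrank
  -- elements of the domain
  have hSr : S.rank < η.rank := by rw [hηrank]; exact hSηo
  have hδr : δ.rank < η.rank := hδS.trans hSr
  have hWr : W.rank < η.rank := hWS.trans hSr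
  have hEr : E.rank < η.rank := (hES.trans hWS).trans hSr
  have hRr : R.rank < η.rank := (hRS.trans hWS).trans hSr
  set sS : VPAux.Dom η.rank := ⟨S, hSr⟩ with hsS
  set sδ : VPAux.Dom η.rank := ⟨δ, hδr⟩ with hsδ
  set sW : VPAux.Dom η.rank := ⟨W, hWr⟩ with hsW
  set sE : VPAux.Dom η.rank := ⟨E, hEr⟩ with hsE
  set sR : VPAux.Dom η.rank := ⟨R, hRr⟩ with hsR
  set sκ : VPAux.Dom η.rank := ⟨κ, hκrank⟩ with hsκ
  -- transfer of atomic facts along j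
  have hjB : ∀ a : VPAux.Dom η.rank, a.1 ∈ B → (j a).1 ∈ B := by
    intro a ha
    have h0 := @FirstOrder.Language.ElementaryEmbedding.map_formula LStd _ _
      (VStructure η.rank B) (VStructure ζ.rank B) j _
      (VPAux.rF (Sum.inl 0) : LStd.Formula (Fin 1)) (fun _ => a)
    rw [VPAux.VFRealize_rF, VPAux.VFRealize_rF] at h0
    exact h0.2 ha
  have hjmem : ∀ a b : VPAux.Dom η.rank, a.1 ∈ b.1 → (j a).1 ∈ (j b).1 := by
    intro a b hab
    have h0 := @FirstOrder.Language.ElementaryEmbedding.map_formula LStd _ _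
      (VStructure η.rank B) (VStructure ζ.rank B) j _
      (VPAux.memF (Sum.inl 0) (Sum.inl 1) : LStd.Formula (Fin 2)) ![a, b]
    rw [VPAux.VFRealize_memF, VPAux.VFRealize_memF] at h0
    exact h0.2 hab
  have hjpair : ∀ a b c : VPAux.Dom η.rank, c.1 = ZFSet.pair a.1 b.1 →
      (j c).1 = ZFSet.pair (j a).1 (j b).1 := by
    intro a b c habc
    have h0 := @FirstOrder.Language.ElementaryEmbedding.map_formula LStd _ _
      (VStructure η.rank B) (VStructure ζ.rank B) j _
      (VPAux.pairF (Sum.inl 0) (Sum.inl 1) (Sum.inl 2) : LStd.Formula (Fin 3)) ![a, b, c]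
    rw [VPAux.VFRealize_pairF, VPAux.VFRealize_pairF] at h0
    exact h0.2 habc
  -- decompose j S
  have hjSB : (j sS).1 ∈ B := hjB sS hSB
  obtain ⟨N, E', R', hcode', hNord, hE'p, hR's⟩ := hcode _ hjSB
  have hjpair1 : (j sS).1 = ZFSet.pair (j sδ).1 (j sW).1 := hjpair sδ sW sS hScode
  have hjpair2 : (j sW).1 = ZFSet.pair (j sE).1 (j sR).1 := hjpair sE sR sW rfl
  obtain ⟨hNeq, hWeq⟩ := ZFSet.pair_inj.1 (hjpair1.symm.trans hcode')
  obtain ⟨hE'eq, hR'eq⟩ := ZFSet.pair_inj.1 (hjpair2.symm.trans hWeq)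
  -- η ∈ N, hence η ⊆ N
  have hjκjδ : (j sκ).1 ∈ (j sδ).1 := hjmem sκ sδ hκmemδ
  have hNord' : (j sδ).1.IsOrdinal := by rw [hNeq]; exact hNord
  have hηjδ : η ∈ (j sδ).1 := hNord'.mem_trans hηjκ hjκjδ
  have hηN : η ∈ N := by rw [← hNeq]; exact hηjδ
  have hηsubN : η ⊆ N := hNord.subset_of_mem hηN
  -- cardinal arithmetic
  have hmkδ : Cardinal.mk δ.toSet = Cardinal.lift.{u + 1} δ.rank.card :=
    VPAux.mk_toSet_of_isOrdinal hδord
  have hmkη : Cardinal.mk η.toSet = Cardinal.lift.{u + 1} (Order.succ S.rank.card) := by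
    rw [VPAux.mk_toSet_of_isOrdinal hηord, hηrank, hηo, Cardinal.card_ord]
  have hlt : Cardinal.mk δ.toSet < Cardinal.mk η.toSet := by
    rw [hmkδ, hmkη]
    exact Cardinal.lift_lt.2 (lt_of_le_of_lt (Ordinal.card_le_card hδS.le) (Order.lt_succ _))
  have hleN : Cardinal.mk η.toSet ≤ Cardinal.mk N.toSet :=
    Cardinal.mk_le_mk_of_subset (ZFSet.toSet_subset_iff.2 hηsubN)
  have hne : Cardinal.mk δ.toSet ≠ Cardinal.mk N.toSet :=
    ne_of_lt (lt_of_lt_of_le hlt hleN)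
  -- ranks on the ζ side
  have hNζ : N.rank < ζ.rank := by rw [← hNeq]; exact (j sδ).2
  have hE'ζ : E'.rank < ζ.rank := by rw [← hE'eq]; exact (j sE).2
  have hR'ζ : R'.rank < ζ.rank := by rw [← hR'eq]; exact (j sR).2
  -- the elementary embedding between coded structures
  refine ⟨S, hSB, (j sS).1, hjSB, δ, E, R, N, E', R', hScode, hcode', hne, ?_⟩
  letI instM : LStd.Structure δ.toSet := codedStructure δ E R
  letI instN : LStd.Structure N.toSet := codedStructure N E' R'
  have hkmem : ∀ x : δ.toSet, (j (VPAux.embD hδr x)).1 ∈ N := by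
    intro x
    rw [← hNeq]
    exact hjmem (VPAux.embD hδr x) sδ ((ZFSet.mem_toSet _ _).1 x.2)
  refine ⟨⟨fun x => ⟨(j (VPAux.embD hδr x)).1, (ZFSet.mem_toSet _ _).2 (hkmem x)⟩, ?_⟩⟩
  intro n φ v
  -- soundness on the η side
  have h1 := VPAux.relf_sound (A := B) (hM := hδr) (hE := hEr) (hR := hRr) φ v default
  have e1 : (fun i : Fin 0 => VPAux.embD hδr ((default : Fin 0 → δ.toSet) i)) =
      (default : Fin 0 → VPAux.Dom η.rank) :=
    Subsingleton.elim _ _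
  rw [e1] at h1
  -- soundness on the ζ side
  have h4 := VPAux.relf_sound (A := B) (hM := hNζ) (hE := hE'ζ) (hR := hR'ζ) φ
    (fun i => (⟨(j (VPAux.embD hδr (v i))).1, (ZFSet.mem_toSet _ _).2 (hkmem (v i))⟩ : N.toSet))
    default
  have e4 : (fun i : Fin 0 => VPAux.embD hNζ ((default : Fin 0 → N.toSet) i)) =
      (default : Fin 0 → VPAux.Dom ζ.rank) :=
    Subsingleton.elim _ _
  rw [e4] at h4
  -- transfer along j
  have h2 := @FirstOrder.Language.ElementaryEmbedding.map_formula LStd _ _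
    (VStructure η.rank B) (VStructure ζ.rank B) j _
    (VPAux.relf φ : LStd.Formula (Fin n ⊕ Fin 3))
    (Sum.elim (fun g => VPAux.embD hδr (v g)) (VPAux.par hδr hEr hRr))
  have h3 : ⇑j ∘ (Sum.elim (fun g => VPAux.embD hδr (v g)) (VPAux.par hδr hEr hRr)) =
      Sum.elim (fun g => VPAux.embD hNζ
        ((fun i => (⟨(j (VPAux.embD hδr (v i))).1,
          (ZFSet.mem_toSet _ _).2 (hkmem (v i))⟩ : N.toSet)) g))
        (VPAux.par hNζ hE'ζ hR'ζ) := by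
    funext w
    cases w with
    | inl g => exact Subtype.ext rfl
    | inr i =>
      fin_cases i
      · exact Subtype.ext hNeq
      · exact Subtype.ext hE'eq
      · exact Subtype.ext hR'eq
  rw [h3, VPAux.VFRealize_eq_VRealize, VPAux.VFRealize_eq_VRealize] at h2
  exact h4.trans (h2.trans h1.symm)
end

section
/- Suppose that for every proper class B of ordinal L_std-structures there exist M, N ∈ B whose domains have different cardinalities and an L_std-elementary embedding j : M → N. Then Vopěnka's Principle holds: for every proper class C of L_std-structures there are distinct M, N ∈ C and an L_std-elementary embedding j : M → N. (The proof goes via the class of all ordinal L_std-structures isomorphic to some member of C, and uses only the ordinary Axiom of Choice, not global choice.) -/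
open FirstOrder

universe u

/-- Vopěnka's Principle: for every proper class `C` of `L_std`-structures there are distinct
`M ≠ N` in `C` such that there is an `L_std`-elementary embedding from `M` into `N`. -/
def VopenkaPrinciple : Prop :=
  ∀ C : Set ZFSet.{u}, IsProperClass C → (∀ x ∈ C, IsLStdCode x) →
    ∃ M ∈ C, ∃ N ∈ C, M ≠ N ∧ ElemEmbeddable M N

namespace VPAux

open ZFSet

/-- The von Neumann ordinal coded by an `Ordinal`. -/
noncomputable def vn : Ordinal.{u} → ZFSet.{u}
  | o => ZFSet.range.{u, u} fun x : o.ToType =>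
      vn ((Ordinal.ToType.mk (o := o)).symm x).1
termination_by o => o
decreasing_by exact ((Ordinal.ToType.mk (o := o)).symm x).2

theorem mem_vn {x : ZFSet.{u}} {o : Ordinal.{u}} : x ∈ vn o ↔ ∃ i < o, vn i = x := by
  rw [vn, ZFSet.mem_range]
  constructor
  · rintro ⟨a, rfl⟩
    exact ⟨_, ((Ordinal.ToType.mk (o := o)).symm a).2, rfl⟩
  · rintro ⟨i, hi, rfl⟩
    exact ⟨(Ordinal.ToType.mk (o := o)) ⟨i, hi⟩, by simp⟩

theorem vn_mem_vn {i o : Ordinal.{u}} (h : i < o) : vn i ∈ vn o :=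
  mem_vn.2 ⟨i, h, rfl⟩

theorem vn_injective : Function.Injective vn.{u} := by
  intro i j h
  rcases lt_trichotomy i j with hij | hij | hij
  · exact absurd (h ▸ vn_mem_vn hij) (ZFSet.mem_irrefl _)
  · exact hij
  · exact absurd (h ▸ vn_mem_vn hij) (ZFSet.mem_irrefl _)

theorem isOrdinal_vn (o : Ordinal.{u}) : (vn o).IsOrdinal := by
  constructor
  · rintro y hy z hz
    obtain ⟨i, hio, rfl⟩ := mem_vn.1 hy
    obtain ⟨j, hji, rfl⟩ := mem_vn.1 hz
    exact mem_vn.2 ⟨j, hji.trans hio, rfl⟩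
  · intro y z w hyz hzw hw
    obtain ⟨i, hio, rfl⟩ := mem_vn.1 hw
    obtain ⟨j, hji, rfl⟩ := mem_vn.1 hzw
    obtain ⟨k, hkj, rfl⟩ := mem_vn.1 hyz
    exact mem_vn.2 ⟨k, hkj.trans hji, rfl⟩

/-- The elements of `vn o` correspond to the ordinals below `o`. -/
noncomputable def vnEquiv (o : Ordinal.{u}) : ↥(Set.Iio o) ≃ ↥(vn o).toSet := by
  refine Equiv.ofBijective (fun i => ⟨vn i.1, vn_mem_vn i.2⟩) ⟨?_, ?_⟩
  · intro i j hij
    exact Subtype.ext (vn_injective (congrArg Subtype.val hij))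
  · rintro ⟨x, hx⟩
    obtain ⟨i, hi, rfl⟩ := mem_vn.1 hx
    exact ⟨⟨i, hi⟩, rfl⟩

theorem exists_ordinal_equiv (M : ZFSet.{u}) :
    ∃ O : ZFSet.{u}, O.IsOrdinal ∧ Nonempty (↥M.toSet ≃ ↥O.toSet) := by
  haveI : Small.{u} ↥M.toSet := ZFSet.small_coe M
  set o : Ordinal.{u} := (Cardinal.mk (Shrink.{u} ↥M.toSet)).ord with ho
  refine ⟨vn o, isOrdinal_vn o, ?_⟩
  have h1 : Nonempty (o.ToType ≃ Shrink.{u} ↥M.toSet) := by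
    rw [← Cardinal.eq, Cardinal.mk_toType, ho, Cardinal.card_ord]
  obtain ⟨e⟩ := h1
  exact ⟨((equivShrink ↥M.toSet).trans e.symm).trans
    ((Ordinal.ToType.mk (o := o)).toEquiv.symm.trans (vnEquiv o))⟩

end VPAux

/-- `S` and `T` code isomorphic `L_std`-structures. -/
def CodeIso (S T : ZFSet.{u}) : Prop :=
  ∃ M E R N E' R' : ZFSet.{u}, S = M.pair (E.pair R) ∧ T = N.pair (E'.pair R') ∧
    letI := codedStructure M E R
    letI := codedStructure N E' R'
    Nonempty (↥M.toSet ≃[LStd] ↥N.toSet)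

theorem exists_ordCopy (S : ZFSet.{u}) (hS : IsLStdCode S) :
    ∃ T, IsOrdinalLStdCode T ∧ CodeIso S T := by
  obtain ⟨M, E, R, rfl, hE, hR⟩ := hS
  obtain ⟨O, hO, ⟨f⟩⟩ := VPAux.exists_ordinal_equiv M
  set E' := ZFSet.pairSep
    (fun a b => ∃ c d : ↥M.toSet, ZFSet.pair c.1 d.1 ∈ E ∧ (f c).1 = a ∧ (f d).1 = b) O O
    with hE'def
  set R' := ZFSet.sep (fun a => ∃ c : ↥M.toSet, c.1 ∈ R ∧ (f c).1 = a) O with hR'def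
  have hEiff : ∀ c d : ↥M.toSet,
      (ZFSet.pair (f c).1 (f d).1 ∈ E' ↔ ZFSet.pair c.1 d.1 ∈ E) := by
    intro c d
    constructor
    · intro hmem
      obtain ⟨a, ha, b, hb, hab, c', d', hcd, hfc, hfd⟩ := ZFSet.mem_pairSep.1 hmem
      obtain ⟨h1, h2⟩ := ZFSet.pair_injective hab
      have hc : c' = c := f.injective (Subtype.ext (hfc.trans h1.symm))
      have hd : d' = d := f.injective (Subtype.ext (hfd.trans h2.symm))
      rwa [hc, hd] at hcd
    · intro hmem
      exact ZFSet.mem_pairSep.2 ⟨(f c).1, (f c).2, (f d).1, (f d).2, rfl, c, d, hmem, rfl, rfl⟩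
  have hRiff : ∀ c : ↥M.toSet, ((f c).1 ∈ R' ↔ c.1 ∈ R) := by
    intro c
    constructor
    · intro hmem
      obtain ⟨-, c', hc', hfc⟩ := ZFSet.mem_sep.1 hmem
      have hc : c' = c := f.injective (Subtype.ext hfc)
      rwa [hc] at hc'
    · intro hmem
      exact ZFSet.mem_sep.2 ⟨(f c).2, c, hmem, rfl⟩
  refine ⟨O.pair (E'.pair R'), ⟨O, E', R', rfl, hO, ?_, ?_⟩,
    ⟨M, E, R, O, E', R', rfl, rfl, ?_⟩⟩
  · intro p hp
    obtain ⟨a, ha, b, hb, rfl, -⟩ := ZFSet.mem_pairSep.1 hp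
    exact ⟨a, ha, b, hb, rfl⟩
  · intro a ha
    exact (ZFSet.mem_sep.1 ha).1
  · letI := codedStructure M E R
    letI := codedStructure O E' R'
    refine ⟨⟨f, fun {n} g _ => g.elim, fun {n} r x => ?_⟩⟩
    cases r with
    | eps => exact hEiff (x 0) (x 1)
    | r => exact hRiff (x 0)

/-- The canonical ordinal copy of a coded structure. -/
noncomputable def ordCopy (S : ZFSet.{u}) : ZFSet.{u} :=
  Classical.epsilon fun T => IsOrdinalLStdCode T ∧ CodeIso S T

theorem ordCopy_spec {S : ZFSet.{u}} (hS : IsLStdCode S) :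
    IsOrdinalLStdCode (ordCopy S) ∧ CodeIso S (ordCopy S) :=
  Classical.epsilon_spec (exists_ordCopy S hS)

theorem elemEmbeddable_of_codeIso {S T U V : ZFSet.{u}} (h1 : CodeIso S U) (h2 : CodeIso T V)
    (h3 : ElemEmbeddable U V) : ElemEmbeddable S T := by
  obtain ⟨M, E, R, O, EO, RO, rfl, rfl, ⟨e1⟩⟩ := h1
  obtain ⟨N, EN, RN, P, EP, RP, rfl, rfl, ⟨e2⟩⟩ := h2
  obtain ⟨O', EO', RO', P', EP', RP', hU, hV, ⟨j⟩⟩ := h3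
  obtain ⟨rfl, h'⟩ := ZFSet.pair_injective hU
  obtain ⟨rfl, rfl⟩ := ZFSet.pair_injective h'
  obtain ⟨rfl, h''⟩ := ZFSet.pair_injective hV
  obtain ⟨rfl, rfl⟩ := ZFSet.pair_injective h''
  refine ⟨M, E, R, N, EN, RN, rfl, rfl, ?_⟩
  letI := codedStructure M E R
  letI := codedStructure N EN RN
  letI := codedStructure O EO RO
  letI := codedStructure P EP RP
  exact ⟨(e2.symm.toElementaryEmbedding.comp j).comp e1.toElementaryEmbedding⟩

theorem elemEmbeddable_self {U M E R : ZFSet.{u}} (hU : U = M.pair (E.pair R)) :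
    ElemEmbeddable U U :=
  ⟨M, E, R, M, E, R, hU, hU,
    letI := codedStructure M E R
    ⟨FirstOrder.Language.ElementaryEmbedding.refl LStd ↥M.toSet⟩⟩

/-- If for every proper class `B` of ordinal `L_std`-structures there are `M, N ∈ B` whose
domains have different cardinalities with an `L_std`-elementary embedding `j : M → N`, then
Vopěnka's Principle holds. -/
theorem vopenkaPrinciple_of_ordinalClassVP
    (h : ∀ B : Set ZFSet.{u}, IsProperClass B → (∀ x ∈ B, IsOrdinalLStdCode x) →
      ∃ M ∈ B, ∃ N ∈ B, ElemEmbeddableDiffCard M N) :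
    VopenkaPrinciple.{u} := by
  intro C hC hcode
  by_cases hA : ∃ S ∈ C, ∃ T ∈ C, S ≠ T ∧ ordCopy S = ordCopy T
  · obtain ⟨S, hS, T, hT, hne, heq⟩ := hA
    obtain ⟨-, h1⟩ := ordCopy_spec (hcode S hS)
    obtain ⟨-, h2⟩ := ordCopy_spec (hcode T hT)
    rw [heq] at h1
    obtain ⟨M, E, R, N, EN, RN, -, hOT, -⟩ := id h2
    exact ⟨S, hS, T, hT, hne, elemEmbeddable_of_codeIso h1 h2 (elemEmbeddable_self hOT)⟩
  · push_neg at hA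
    have hinj : ∀ S ∈ C, ∀ T ∈ C, ordCopy S = ordCopy T → S = T := fun S hS T hT he =>
      Classical.byContradiction fun hne => hA S hS T hT hne he
    set B : Set ZFSet.{u} := {U | ∃ S ∈ C, ordCopy S = U} with hBdef
    have hBord : ∀ U ∈ B, IsOrdinalLStdCode U := by
      rintro U ⟨S, hS, rfl⟩
      exact (ordCopy_spec (hcode S hS)).1
    have hBproper : IsProperClass B := by
      rintro ⟨b, hb⟩
      apply hC
      classical
      set g : ZFSet.{u} → ZFSet.{u} :=
        fun y => Classical.epsilon fun S => S ∈ C ∧ ordCopy S = y with hgdef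
      haveI : ZFSet.Definable₁ g := Classical.allZFSetDefinable _
      refine ⟨ZFSet.sep (· ∈ C) (ZFSet.image g b), ?_⟩
      ext x
      change x ∈ ZFSet.sep (· ∈ C) (ZFSet.image g b) ↔ x ∈ C
      simp only [ZFSet.mem_sep]
      constructor
      · exact fun hx => hx.2
      · intro hx
        refine ⟨?_, hx⟩
        have hmem : ordCopy x ∈ b := by
          change ordCopy x ∈ b.toSet; rw [hb]
          exact ⟨x, hx, rfl⟩
        have hgx : g (ordCopy x) ∈ C ∧ ordCopy (g (ordCopy x)) = ordCopy x :=
          Classical.epsilon_spec (⟨x, hx, rfl⟩ : ∃ S, S ∈ C ∧ ordCopy S = ordCopy x)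
        have : g (ordCopy x) = x := hinj _ hgx.1 _ hx hgx.2
        exact ZFSet.mem_image.2 ⟨ordCopy x, hmem, this⟩
    obtain ⟨U, hU, V, hV, hUV⟩ := h B hBproper hBord
    obtain ⟨S, hS, rfl⟩ := hU
    obtain ⟨T, hT, rfl⟩ := hV
    obtain ⟨Mu, Eu, Ru, Nv, Ev, Rv, hU', hV', hcard, hemb⟩ := hUV
    refine ⟨S, hS, T, hT, ?_, ?_⟩
    · intro hST
      apply hcard
      have : Mu = Nv :=
        (ZFSet.pair_injective (hU'.symm.trans ((congrArg ordCopy hST).trans hV'))).1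
      rw [this]
    · exact elemEmbeddable_of_codeIso (ordCopy_spec (hcode S hS)).2
        (ordCopy_spec (hcode T hT)).2 ⟨Mu, Eu, Ru, Nv, Ev, Rv, hU', hV', hemb⟩
end
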